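/- arXiv:1002.0042 — 6 statements merged into one kernel-verified Lean document; each statement's English description precedes it below -/
import Mathlib

section
/- Let F be a finite set of cardinality N ≥ 2 and let P_θ, θ∈F, be probability measures on a measurable space 𝒳 dominated by a σ-finite measure μ with densities p_θ. Define h² := (1/N²) Σ_{θ,θ'∈F} H²(P_θ, P_{θ'}), where H² denotes squared Hellinger distance. Then the uniform-prior Bayes testing risk satisfies r̄ ≥ 1 − 1/N − ((N−2)/N)·(h²/2) − (√(N−1)/N)·√( h²(2−h²) ). -/
open MeasureTheory Real
open scoped ENNReal NNReal

lemma myIntegrable_mul_of_sq {X : Type*} [MeasurableSpace X] {μ : Measure X} {f g : X → ℝ}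
    (hf : AEStronglyMeasurable f μ) (hg : AEStronglyMeasurable g μ)
    (hf2 : Integrable (fun x => f x ^ 2) μ) (hg2 : Integrable (fun x => g x ^ 2) μ) :
    Integrable (fun x => f x * g x) μ := by
  refine Integrable.mono' ((hf2.add hg2).div_const 2) (hf.mul hg) ?_
  filter_upwards with x
  have h1 : ‖f x * g x‖ = |f x| * |g x| := by rw [Real.norm_eq_abs, abs_mul]
  rw [h1]
  simp only [Pi.add_apply]
  nlinarith [sq_nonneg (|f x| - |g x|), sq_abs (f x), sq_abs (g x), abs_nonneg (f x),
    abs_nonneg (g x)]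

lemma myAuxPtwise {F : Type*} [Fintype F] (a : F → ℝ) (ha : ∀ θ, 0 ≤ a θ)
    {N : ℝ} (hN : N = Fintype.card F) (hN1 : 1 ≤ N) (θ0 : F) :
    a θ0 ^ 2 ≤ (N⁻¹ * ∑ θ, a θ) ^ 2
      + Real.sqrt ((N - 1) / N) *
          (2 * ((N⁻¹ * ∑ θ, a θ) * Real.sqrt ((∑ θ, a θ ^ 2) - N * (N⁻¹ * ∑ θ, a θ) ^ 2)))
      + (N - 1) / N * ((∑ θ, a θ ^ 2) - N * (N⁻¹ * ∑ θ, a θ) ^ 2) := by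
  have hNpos : (0:ℝ) < N := lt_of_lt_of_le one_pos hN1
  have hNne : N ≠ 0 := ne_of_gt hNpos
  set m : ℝ := N⁻¹ * ∑ θ, a θ with hm
  set v : ℝ := (∑ θ, a θ ^ 2) - N * m ^ 2 with hv
  have hsum : ∑ θ, a θ = N * m := by rw [hm]; field_simp
  have hcard : ((Fintype.card F : ℕ) : ℝ) = N := hN.symm
  have hv_eq : ∑ θ, (a θ - m) ^ 2 = v := by
    have : ∀ θ, (a θ - m) ^ 2 = a θ ^ 2 - 2 * m * a θ + m ^ 2 := fun θ => by ring
    simp only [this, Finset.sum_add_distrib, Finset.sum_sub_distrib, ← Finset.mul_sum,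
      Finset.sum_const, Finset.card_univ, nsmul_eq_mul, hsum, hcard, hv]
    ring
  have hv0 : 0 ≤ v := hv_eq ▸ Finset.sum_nonneg fun θ _ => sq_nonneg _
  have hkey : N * (a θ0 - m) ^ 2 ≤ (N - 1) * v := by
    classical
    set s := (Finset.univ : Finset F).erase θ0 with hs
    have hsum' : ∑ θ ∈ s, (a θ - m) = -(a θ0 - m) := by
      have := Finset.sum_erase_add Finset.univ (fun θ => a θ - m) (Finset.mem_univ θ0)
      beta_reduce at this
      have htot : ∑ θ, (a θ - m) = 0 := by
        simp only [Finset.sum_sub_distrib, hsum, Finset.sum_const, Finset.card_univ,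
          nsmul_eq_mul, hcard]
        ring
      linarith [this, htot]
    have hCS : (∑ θ ∈ s, (a θ - m)) ^ 2 ≤ (s.card : ℝ) * ∑ θ ∈ s, (a θ - m) ^ 2 :=
      sq_sum_le_card_mul_sum_sq
    have hscard : (s.card : ℝ) = N - 1 := by
      rw [hs, Finset.card_erase_of_mem (Finset.mem_univ θ0), Finset.card_univ]
      have hc1 : 1 ≤ Fintype.card F := by
        by_contra h
        push_neg at h
        interval_cases h' : Fintype.card F
        · simp [h'] at hcard; linarith
      push_cast [hc1]
      rw [hcard]
    have hrest : ∑ θ ∈ s, (a θ - m) ^ 2 = v - (a θ0 - m) ^ 2 := by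
      have := Finset.sum_erase_add Finset.univ (fun θ => (a θ - m) ^ 2) (Finset.mem_univ θ0)
      beta_reduce at this
      rw [hv_eq] at this
      linarith
    rw [hsum', hrest, hscard] at hCS
    nlinarith [sq_nonneg (a θ0 - m)]
  have hm0 : 0 ≤ m := mul_nonneg (inv_nonneg.2 hNpos.le) (Finset.sum_nonneg fun θ _ => ha θ)
  have hc0 : (0:ℝ) ≤ (N - 1) / N := div_nonneg (by linarith) hNpos.le
  have hcv : 0 ≤ (N - 1) / N * v := mul_nonneg hc0 hv0
  have hle : a θ0 ≤ m + Real.sqrt ((N - 1) / N * v) := by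
    rcases le_or_gt (a θ0) m with h | h
    · linarith [Real.sqrt_nonneg ((N - 1) / N * v)]
    · have h2 : (a θ0 - m) ^ 2 ≤ (N - 1) / N * v := by
        rw [div_mul_eq_mul_div, le_div_iff₀ hNpos]
        nlinarith
      have h3 := Real.sqrt_le_sqrt h2
      rw [Real.sqrt_sq (by linarith : (0:ℝ) ≤ a θ0 - m)] at h3
      linarith
  have hfin : a θ0 ^ 2 ≤ (m + Real.sqrt ((N - 1) / N * v)) ^ 2 :=
    pow_le_pow_left₀ (ha θ0) hle 2
  have hexp : (m + Real.sqrt ((N - 1) / N * v)) ^ 2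
      = m ^ 2 + Real.sqrt ((N - 1) / N) * (2 * (m * Real.sqrt v)) + (N - 1) / N * v := by
    rw [add_sq, Real.sq_sqrt hcv, Real.sqrt_mul hc0]
    ring
  linarith [hfin, hexp]

/-- The uniform-prior Bayes testing risk `r̄ = inf_T (1/N) Σ_θ P_θ {T ≠ θ}`, the infimum
being over all measurable tests `T : X → F`. -/
noncomputable def bayesRisk {X F : Type*} [MeasurableSpace X] [Fintype F]
    (P : F → Measure X) : ℝ :=
  ⨅ T : {T : X → F // ∀ θ, MeasurableSet {x | T x = θ}},
    (Fintype.card F : ℝ)⁻¹ * ∑ θ, (P θ {x | T.1 x ≠ θ}).toReal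

/-- Hellinger lower bound, Example 3:
with `h² := (1/N²) Σ_{θ,θ'} H²(P_θ, P_θ')`, where `H²(P,Q) = ∫ (√p - √q)² dμ`,
`r̄ ≥ 1 - 1/N - ((N-2)/N) h²/2 - (√(N-1)/N) √(h²(2-h²))`. -/
theorem statement10 {X F : Type*} [MeasurableSpace X] [Fintype F]
    (μ : Measure X) [SigmaFinite μ]
    (p : F → X → ℝ) (hp_meas : ∀ θ, Measurable (p θ)) (hp_nonneg : ∀ θ x, 0 ≤ p θ x)
    (P : F → Measure X)
    (hP : ∀ θ, P θ = μ.withDensity (fun x => ENNReal.ofReal (p θ x)))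
    (hPprob : ∀ θ, IsProbabilityMeasure (P θ))
    (N : ℝ) (hN : N = Fintype.card F) (hN2 : 2 ≤ N)
    (hsq : ℝ)
    (h_hsq : hsq = (N ^ 2)⁻¹ *
      ∑ θ, ∑ θ', ∫ x, (Real.sqrt (p θ x) - Real.sqrt (p θ' x)) ^ 2 ∂μ) :
    1 - 1 / N - ((N - 2) / N) * (hsq / 2) -
        (Real.sqrt (N - 1) / N) * Real.sqrt (hsq * (2 - hsq)) ≤
      bayesRisk P := by
  classical
  have hNpos : (0:ℝ) < N := lt_of_lt_of_le two_pos hN2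
  have hNne : N ≠ 0 := ne_of_gt hNpos
  -- basic integrability facts
  have hPuniv : ∀ θ, ∫⁻ x, ENNReal.ofReal (p θ x) ∂μ = 1 := by
    intro θ
    have h1 := (hPprob θ).measure_univ
    rw [hP θ, withDensity_apply _ MeasurableSet.univ, Measure.restrict_univ] at h1
    exact h1
  have hip : ∀ θ, Integrable (p θ) μ := by
    intro θ
    refine ⟨(hp_meas θ).aestronglyMeasurable, ?_⟩
    rw [hasFiniteIntegral_iff_ofReal (Filter.Eventually.of_forall (hp_nonneg θ)), hPuniv θ]
    exact ENNReal.one_lt_top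
  have hint1 : ∀ θ, ∫ x, p θ x ∂μ = 1 := by
    intro θ
    rw [integral_eq_lintegral_of_nonneg_ae (Filter.Eventually.of_forall (hp_nonneg θ))
      (hp_meas θ).aestronglyMeasurable, hPuniv θ]
    simp
  have hset : ∀ θ (S : Set X), MeasurableSet S → (P θ S).toReal = ∫ x in S, p θ x ∂μ := by
    intro θ S hS
    rw [hP θ, withDensity_apply _ hS,
      integral_eq_lintegral_of_nonneg_ae (Filter.Eventually.of_forall fun x => hp_nonneg θ x)
      (hp_meas θ).aestronglyMeasurable.restrict]
  -- square roots of densities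
  have hsm : ∀ θ, Measurable fun x => Real.sqrt (p θ x) := fun θ => (hp_meas θ).sqrt
  have hsq_int : ∀ θ, Integrable (fun x => Real.sqrt (p θ x) ^ 2) μ := by
    intro θ
    exact (hip θ).congr (Filter.Eventually.of_forall fun x =>
      (Real.sq_sqrt (hp_nonneg θ x)).symm)
  have hprod : ∀ θ θ', Integrable (fun x => Real.sqrt (p θ x) * Real.sqrt (p θ' x)) μ :=
    fun θ θ' => myIntegrable_mul_of_sq (hsm θ).aestronglyMeasurable
      (hsm θ').aestronglyMeasurable (hsq_int θ) (hsq_int θ')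
  have hH : ∀ θ θ', ∫ x, (Real.sqrt (p θ x) - Real.sqrt (p θ' x)) ^ 2 ∂μ
      = 2 - 2 * ∫ x, Real.sqrt (p θ x) * Real.sqrt (p θ' x) ∂μ := by
    intro θ θ'
    have hpt : ∀ x, (Real.sqrt (p θ x) - Real.sqrt (p θ' x)) ^ 2
        = (p θ x + p θ' x) - 2 * (Real.sqrt (p θ x) * Real.sqrt (p θ' x)) := by
      intro x
      have h1 := Real.sq_sqrt (hp_nonneg θ x)
      have h2 := Real.sq_sqrt (hp_nonneg θ' x)
      nlinarith [Real.sqrt_nonneg (p θ x), Real.sqrt_nonneg (p θ' x)]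
    have hadd : Integrable (fun a => p θ a + p θ' a) μ := (hip θ).add (hip θ')
    rw [integral_congr_ae (Filter.Eventually.of_forall hpt),
      integral_sub hadd ((hprod θ θ').const_mul 2),
      integral_add (hip θ) (hip θ'), integral_const_mul, hint1, hint1]
    norm_num
  -- the mean of square roots
  set s : X → ℝ := fun x => N⁻¹ * ∑ θ, Real.sqrt (p θ x) with hs_def
  have hs_meas : Measurable s := (Finset.univ.measurable_sum fun θ _ => hsm θ).const_mul N⁻¹
  have hs_nonneg : ∀ x, 0 ≤ s x := fun x =>
    mul_nonneg (inv_nonneg.2 hNpos.le) (Finset.sum_nonneg fun θ _ => Real.sqrt_nonneg _)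
  have hs_sq : ∀ x, s x ^ 2
      = N⁻¹ ^ 2 * ∑ θ, ∑ θ', Real.sqrt (p θ x) * Real.sqrt (p θ' x) := by
    intro x
    rw [hs_def]
    rw [mul_pow, sq (∑ θ, Real.sqrt (p θ x)), Finset.sum_mul_sum]
  have hs2_int : Integrable (fun x => s x ^ 2) μ := by
    simp only [hs_sq]
    exact (integrable_finset_sum _ fun θ _ =>
      integrable_finset_sum _ fun θ' _ => hprod θ θ').const_mul _
  have hs2_val : ∫ x, s x ^ 2 ∂μ = 1 - hsq / 2 := by
    have h1 : ∫ x, s x ^ 2 ∂μ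
        = N⁻¹ ^ 2 * ∑ θ, ∑ θ', ∫ x, Real.sqrt (p θ x) * Real.sqrt (p θ' x) ∂μ := by
      simp only [hs_sq]
      rw [integral_const_mul]
      congr 1
      rw [integral_finset_sum _ fun θ _ => integrable_finset_sum _ fun θ' _ => hprod θ θ']
      exact Finset.sum_congr rfl fun θ _ =>
        integral_finset_sum _ fun θ' _ => hprod θ θ'
    have h2 : hsq
        = 2 - 2 * (N⁻¹ ^ 2 * ∑ θ, ∑ θ', ∫ x, Real.sqrt (p θ x) * Real.sqrt (p θ' x) ∂μ) := by
      rw [h_hsq]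
      have : ∀ θ, ∑ θ', ∫ x, (Real.sqrt (p θ x) - Real.sqrt (p θ' x)) ^ 2 ∂μ
          = ∑ θ' : F, (2 - 2 * ∫ x, Real.sqrt (p θ x) * Real.sqrt (p θ' x) ∂μ) :=
        fun θ => Finset.sum_congr rfl fun θ' _ => hH θ θ'
      simp only [this, Finset.sum_sub_distrib, Finset.sum_const, Finset.card_univ,
        nsmul_eq_mul, ← Finset.mul_sum, ← hN]
      field_simp
    rw [h1]
    linarith [h2]
  -- the "variance" term
  set g : X → ℝ := fun x => (∑ θ, p θ x) - N * s x ^ 2 with hg_def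
  have hg_nonneg : ∀ x, 0 ≤ g x := by
    intro x
    have hCS : (∑ θ, Real.sqrt (p θ x)) ^ 2
        ≤ (Fintype.card F : ℝ) * ∑ θ, Real.sqrt (p θ x) ^ 2 := by
      simpa using (sq_sum_le_card_mul_sum_sq
        (s := (Finset.univ : Finset F)) (f := fun θ => Real.sqrt (p θ x)))
    have hrw : ∑ θ, Real.sqrt (p θ x) ^ 2 = ∑ θ, p θ x :=
      Finset.sum_congr rfl fun θ _ => Real.sq_sqrt (hp_nonneg θ x)
    rw [hrw, ← hN] at hCS
    have hsx : s x = N⁻¹ * ∑ θ, Real.sqrt (p θ x) := rfl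
    rw [hg_def]
    have h2 : N * s x ^ 2 = (∑ θ, Real.sqrt (p θ x)) ^ 2 / N := by
      rw [hsx]; field_simp
    simp only [h2]
    rw [sub_nonneg, div_le_iff₀ hNpos]
    linarith [hCS]
  have hg_meas : Measurable g :=
    (Finset.univ.measurable_sum fun θ _ => hp_meas θ).sub
      ((hs_meas.pow_const 2).const_mul N)
  have hg_int : Integrable g μ :=
    (integrable_finset_sum _ fun θ _ => hip θ).sub (hs2_int.const_mul N)
  have hg_val : ∫ x, g x ∂μ = N * hsq / 2 := by
    rw [hg_def]
    rw [integral_sub (integrable_finset_sum _ fun θ _ => hip θ) (hs2_int.const_mul N),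
      integral_finset_sum _ fun θ _ => hip θ, integral_const_mul, hs2_val]
    simp only [hint1, Finset.sum_const, Finset.card_univ, nsmul_eq_mul, mul_one, ← hN]
    ring
  have hsg_meas : Measurable fun x => Real.sqrt (g x) := hg_meas.sqrt
  have hsg2_int : Integrable (fun x => Real.sqrt (g x) ^ 2) μ :=
    hg_int.congr (Filter.Eventually.of_forall fun x => (Real.sq_sqrt (hg_nonneg x)).symm)
  have hsg_prod_int : Integrable (fun x => s x * Real.sqrt (g x)) μ :=
    myIntegrable_mul_of_sq hs_meas.aestronglyMeasurable hsg_meas.aestronglyMeasurable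
      hs2_int hsg2_int
  -- Cauchy–Schwarz
  have hCSint : ∫ x, s x * Real.sqrt (g x) ∂μ
      ≤ Real.sqrt (1 - hsq / 2) * Real.sqrt (N * hsq / 2) := by
    have h22 : (2:ℝ).HolderConjugate 2 := Real.HolderConjugate.two_two
    have hsmem : MemLp s (ENNReal.ofReal 2) μ := by
      rw [show ENNReal.ofReal 2 = 2 by norm_num]
      exact (memLp_two_iff_integrable_sq hs_meas.aestronglyMeasurable).2 hs2_int
    have hgmem : MemLp (fun x => Real.sqrt (g x)) (ENNReal.ofReal 2) μ := by
      rw [show ENNReal.ofReal 2 = 2 by norm_num]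
      exact (memLp_two_iff_integrable_sq hsg_meas.aestronglyMeasurable).2 hsg2_int
    have h := integral_mul_le_Lp_mul_Lq_of_nonneg h22
      (Filter.Eventually.of_forall hs_nonneg)
      (Filter.Eventually.of_forall fun x => Real.sqrt_nonneg (g x)) hsmem hgmem
    simp only [Real.rpow_two] at h
    have hrw2 : ∫ a, Real.sqrt (g a) ^ 2 ∂μ = N * hsq / 2 := by
      rw [← hg_val]
      exact integral_congr_ae (Filter.Eventually.of_forall fun x => Real.sq_sqrt (hg_nonneg x))
    rw [hs2_val, hrw2] at h
    calc ∫ x, s x * Real.sqrt (g x) ∂μ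
        ≤ (1 - hsq / 2) ^ ((1:ℝ)/2) * (N * hsq / 2) ^ ((1:ℝ)/2) := h
      _ = Real.sqrt (1 - hsq / 2) * Real.sqrt (N * hsq / 2) := by
          rw [← Real.sqrt_eq_rpow, ← Real.sqrt_eq_rpow]
  -- the dominating function B
  set B : X → ℝ := fun x => s x ^ 2
    + Real.sqrt ((N - 1) / N) * (2 * (s x * Real.sqrt (g x)))
    + (N - 1) / N * g x with hB_def
  have hB_int : Integrable B μ :=
    (hs2_int.add ((hsg_prod_int.const_mul 2).const_mul (Real.sqrt ((N - 1) / N)))).add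
      (hg_int.const_mul ((N - 1) / N))
  have hptB : ∀ θ x, p θ x ≤ B x := by
    intro θ x
    have hrw : (∑ θ', Real.sqrt (p θ' x) ^ 2) = ∑ θ', p θ' x :=
      Finset.sum_congr rfl fun θ' _ => Real.sq_sqrt (hp_nonneg θ' x)
    have h := myAuxPtwise (fun θ' => Real.sqrt (p θ' x)) (fun θ' => Real.sqrt_nonneg _)
      hN (by linarith) θ
    rw [Real.sq_sqrt (hp_nonneg θ x), hrw] at h
    simpa only [hB_def, hg_def, hs_def] using h
  -- nonnegativity facts
  have hsq0 : 0 ≤ hsq := by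
    rw [h_hsq]
    exact mul_nonneg (inv_nonneg.2 (sq_nonneg N))
      (Finset.sum_nonneg fun θ _ => Finset.sum_nonneg fun θ' _ =>
        integral_nonneg fun x => sq_nonneg _)
  have hA0 : (0:ℝ) ≤ 1 - hsq / 2 := by
    rw [← hs2_val]; exact integral_nonneg fun x => sq_nonneg _
  -- integral of B
  have hintB : ∫ x, B x ∂μ
      ≤ 1 + (N - 2) * hsq / 2 + Real.sqrt (N - 1) * Real.sqrt (hsq * (2 - hsq)) := by
    have hB_eq : ∫ x, B x ∂μ = (1 - hsq / 2)
        + Real.sqrt ((N - 1) / N) * (2 * ∫ x, s x * Real.sqrt (g x) ∂μ)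
        + (N - 1) / N * (N * hsq / 2) := by
      simp only [hB_def]
      have hi2 : Integrable (fun x => Real.sqrt ((N - 1) / N) * (2 * (s x * Real.sqrt (g x)))) μ :=
        (hsg_prod_int.const_mul 2).const_mul (Real.sqrt ((N - 1) / N))
      have hi1 : Integrable
          (fun x => s x ^ 2 + Real.sqrt ((N - 1) / N) * (2 * (s x * Real.sqrt (g x)))) μ :=
        hs2_int.add hi2
      have hi3 : Integrable (fun x => (N - 1) / N * g x) μ := hg_int.const_mul ((N - 1) / N)
      rw [integral_add hi1 hi3, integral_add hs2_int hi2,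
        integral_const_mul, integral_const_mul, integral_const_mul, hs2_val, hg_val]
    rw [hB_eq]
    have hc0 : (0:ℝ) ≤ (N - 1) / N := div_nonneg (by linarith) hNpos.le
    have hmid : Real.sqrt ((N - 1) / N) * (2 * ∫ x, s x * Real.sqrt (g x) ∂μ)
        ≤ Real.sqrt (N - 1) * Real.sqrt (hsq * (2 - hsq)) := by
      have hstep : Real.sqrt ((N - 1) / N)
            * (2 * (Real.sqrt (1 - hsq / 2) * Real.sqrt (N * hsq / 2)))
          = Real.sqrt (N - 1) * Real.sqrt (hsq * (2 - hsq)) := by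
        calc Real.sqrt ((N - 1) / N)
              * (2 * (Real.sqrt (1 - hsq / 2) * Real.sqrt (N * hsq / 2)))
            = 2 * (Real.sqrt ((N - 1) / N) * Real.sqrt ((1 - hsq / 2) * (N * hsq / 2))) := by
              rw [← Real.sqrt_mul hA0]; ring
          _ = 2 * Real.sqrt ((N - 1) / N * ((1 - hsq / 2) * (N * hsq / 2))) := by
              rw [← Real.sqrt_mul hc0]
          _ = Real.sqrt ((2:ℝ) ^ 2 * ((N - 1) / N * ((1 - hsq / 2) * (N * hsq / 2)))) := by
              rw [Real.sqrt_mul (sq_nonneg 2), Real.sqrt_sq (by norm_num : (0:ℝ) ≤ 2)]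
          _ = Real.sqrt ((N - 1) * (hsq * (2 - hsq))) := by
              congr 1
              field_simp
          _ = Real.sqrt (N - 1) * Real.sqrt (hsq * (2 - hsq)) :=
              Real.sqrt_mul (by linarith) _
      calc Real.sqrt ((N - 1) / N) * (2 * ∫ x, s x * Real.sqrt (g x) ∂μ)
          ≤ Real.sqrt ((N - 1) / N)
              * (2 * (Real.sqrt (1 - hsq / 2) * Real.sqrt (N * hsq / 2))) := by
            apply mul_le_mul_of_nonneg_left (by linarith [hCSint]) (Real.sqrt_nonneg _)
        _ = Real.sqrt (N - 1) * Real.sqrt (hsq * (2 - hsq)) := hstep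
    have hlast : (N - 1) / N * (N * hsq / 2) = (N - 1) * hsq / 2 := by
      field_simp
    linarith [hmid, hlast.le, hlast.ge]
  -- now bound the Bayes risk
  have hcard2 : 2 ≤ Fintype.card F := by exact_mod_cast hN ▸ hN2
  haveI : Nonempty F := Fintype.card_pos_iff.mp (by omega)
  have hne : Nonempty {T : X → F // ∀ θ, MeasurableSet {x | T x = θ}} := by
    refine ⟨⟨fun _ => Classical.arbitrary F, fun θ => ?_⟩⟩
    by_cases h : Classical.arbitrary F = θ
    · simp only [h, Set.setOf_true]; exact MeasurableSet.univ
    · simp only [h, Set.setOf_false]; exact MeasurableSet.empty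
  rw [bayesRisk]
  refine le_ciInf fun T => ?_
  have hPT : ∀ θ, (P θ {x | T.1 x ≠ θ}).toReal = 1 - ∫ x in {x | T.1 x = θ}, p θ x ∂μ := by
    intro θ
    have hmeasθ := T.2 θ
    have hcompl : {x | T.1 x ≠ θ} = {x | T.1 x = θ}ᶜ := rfl
    rw [hcompl, measure_compl hmeasθ (measure_ne_top _ _), (hPprob θ).measure_univ,
      ENNReal.toReal_sub_of_le prob_le_one ENNReal.one_ne_top, ENNReal.toReal_one,
      hset θ _ hmeasθ]
  have hkey : ∑ θ, ∫ x in {x | T.1 x = θ}, p θ x ∂μ ≤ ∫ x, B x ∂μ := by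
    calc ∑ θ, ∫ x in {x | T.1 x = θ}, p θ x ∂μ
        ≤ ∑ θ, ∫ x in {x | T.1 x = θ}, B x ∂μ :=
          Finset.sum_le_sum fun θ _ => setIntegral_mono_on (hip θ).integrableOn
            hB_int.integrableOn (T.2 θ) (fun x _ => hptB θ x)
      _ = ∑ θ, ∫ x, Set.indicator {x | T.1 x = θ} B x ∂μ :=
          Finset.sum_congr rfl fun θ _ => (integral_indicator (T.2 θ)).symm
      _ = ∫ x, ∑ θ, Set.indicator {x | T.1 x = θ} B x ∂μ :=
          (integral_finset_sum _ fun θ _ => hB_int.indicator (T.2 θ)).symm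
      _ = ∫ x, B x ∂μ := by
          refine integral_congr_ae (Filter.Eventually.of_forall fun x => ?_)
          show (∑ θ, Set.indicator {x | T.1 x = θ} B x) = B x
          rw [Finset.sum_eq_single (T.1 x)]
          · exact Set.indicator_of_mem (show x ∈ {x' | T.1 x' = T.1 x} from rfl) B
          · intro θ _ hθ
            apply Set.indicator_of_notMem _ B
            intro hx
            exact hθ (Set.mem_setOf_eq ▸ hx).symm
          · intro h; exact absurd (Finset.mem_univ _) h
  have hsum_eq : ∑ θ, (P θ {x | T.1 x ≠ θ}).toReal
      = N - ∑ θ, ∫ x in {x | T.1 x = θ}, p θ x ∂μ := by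
    simp only [hPT, Finset.sum_sub_distrib, Finset.sum_const, Finset.card_univ,
      nsmul_eq_mul, mul_one, ← hN]
  rw [hsum_eq, ← hN]
  calc 1 - 1 / N - ((N - 2) / N) * (hsq / 2) -
        (Real.sqrt (N - 1) / N) * Real.sqrt (hsq * (2 - hsq))
      = N⁻¹ * (N - (1 + (N - 2) * hsq / 2
          + Real.sqrt (N - 1) * Real.sqrt (hsq * (2 - hsq)))) := by
        field_simp
        ring
    _ ≤ N⁻¹ * (N - ∑ θ, ∫ x in {x | T.1 x = θ}, p θ x ∂μ) := by
        apply mul_le_mul_of_nonneg_left _ (inv_nonneg.2 hNpos.le)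
        linarith [hkey, hintB]
end

section
/- Let l > 1 and let f(x) := x^l − 1. Let F be a finite set of cardinality N ≥ 1 and let P_θ, θ∈F, be probability measures on a measurable space 𝒳 dominated by a σ-finite measure μ. Then the uniform-prior Bayes testing risk satisfies r̄ ≥ 1 − ( 1/N^{l−1} + inf_Q Σ_{θ∈F} D_f(P_θ||Q) / N^l )^{1/l}, where the infimum is over all probability measures Q on 𝒳. -/
open MeasureTheory Real
open scoped ENNReal NNReal

/-- The `f`-divergence `D_f(P‖Q) = ∫ f(dP/dQ) dQ` (real-valued; meaningful when `P ≪ Q`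
and the integrand is integrable, in which case it agrees with the usual definition;
otherwise the usual `D_f` is `+∞` and the bound is trivially true). -/
noncomputable def fDivR {X : Type*} [MeasurableSpace X] (f : ℝ → ℝ) (P Q : Measure X) : ℝ :=
  ∫ x, f ((P.rnDeriv Q x).toReal) ∂Q

/-- Example 5, `f(x) = x^l - 1` with `l > 1`:
`r̄ ≥ 1 - (1/N^(l-1) + inf_Q Σ_θ D_f(P_θ‖Q) / N^l)^(1/l)`; the infimum over `Q` is
expressed by universally quantifying over probability measures `Q`. -/
theorem statement11 {X F : Type*} [MeasurableSpace X] [Fintype F] [Nonempty F]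
    (l : ℝ) (hl : 1 < l)
    (μ : Measure X) [SigmaFinite μ]
    (P : F → Measure X) (hPdom : ∀ θ, P θ ≪ μ) (hPprob : ∀ θ, IsProbabilityMeasure (P θ))
    (N : ℝ) (hN : N = Fintype.card F)
    (Q : Measure X) [IsProbabilityMeasure Q]
    (hAC : ∀ θ, P θ ≪ Q)
    (hInt : ∀ θ, Integrable (fun x => ((P θ).rnDeriv Q x).toReal ^ l) Q) :
    1 - (1 / N ^ (l - 1) +
        (∑ θ, fDivR (fun t => t ^ l - 1) (P θ) Q) / N ^ l) ^ (1 / l) ≤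
      bayesRisk P := by
  have hl0 : (0:ℝ) < l := lt_trans one_pos hl
  have hNpos : (0:ℝ) < N := by
    rw [hN]; exact_mod_cast Fintype.card_pos
  -- abbreviations
  set p : F → X → ℝ≥0∞ := fun θ => (P θ).rnDeriv Q with hp
  set S : ℝ := ∑ θ, ∫ x, (p θ x).toReal ^ l ∂Q with hS
  have hSθ_nonneg : ∀ θ : F, (0:ℝ) ≤ ∫ x, (p θ x).toReal ^ l ∂Q := fun θ =>
    integral_nonneg fun x => Real.rpow_nonneg ENNReal.toReal_nonneg l
  have hS_nonneg : (0:ℝ) ≤ S := Finset.sum_nonneg fun θ _ => hSθ_nonneg θ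
  -- lintegral of p θ ^ l equals ofReal of the real integral
  have hlint : ∀ θ : F, ∫⁻ x, p θ x ^ l ∂Q
      = ENNReal.ofReal (∫ x, (p θ x).toReal ^ l ∂Q) := by
    intro θ
    rw [MeasureTheory.ofReal_integral_eq_lintegral_ofReal (hInt θ)
      (Filter.Eventually.of_forall fun x => Real.rpow_nonneg ENNReal.toReal_nonneg l)]
    refine lintegral_congr_ae ?_
    filter_upwards [Measure.rnDeriv_lt_top (P θ) Q] with x hx
    rw [← ENNReal.ofReal_rpow_of_nonneg ENNReal.toReal_nonneg hl0.le,
      ENNReal.ofReal_toReal hx.ne]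
  -- the sum of divergences is S - N
  have hdiv : (∑ θ, fDivR (fun t => t ^ l - 1) (P θ) Q) = S - N := by
    have : ∀ θ : F, fDivR (fun t => t ^ l - 1) (P θ) Q
        = (∫ x, (p θ x).toReal ^ l ∂Q) - 1 := by
      intro θ
      unfold fDivR
      rw [integral_sub (hInt θ) (integrable_const 1), integral_const]
      simp
      rfl
    rw [Finset.sum_congr rfl fun θ _ => this θ, Finset.sum_sub_distrib]
    simp [hN, hS]
  -- the RHS expression simplifies
  have hNl : N ^ l ≠ 0 := (Real.rpow_pos_of_pos hNpos l).ne'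
  have hRHS : (1 / N ^ (l - 1) + (∑ θ, fDivR (fun t => t ^ l - 1) (P θ) Q) / N ^ l) ^ (1 / l)
      = S ^ (1 / l) / N := by
    have h1 : (1:ℝ) / N ^ (l - 1) = N / N ^ l := by
      rw [Real.rpow_sub hNpos, Real.rpow_one]
      field_simp
    rw [hdiv, h1, ← add_div, add_sub_cancel, Real.div_rpow hS_nonneg
      (Real.rpow_nonneg hNpos.le l), ← Real.rpow_mul hNpos.le l (1/l),
      mul_one_div_cancel hl0.ne', Real.rpow_one]
  rw [hRHS]
  -- now bound each test
  have hNe : Nonempty {T : X → F // ∀ θ, MeasurableSet {x | T x = θ}} := by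
    refine ⟨⟨fun _ => Classical.arbitrary F, fun θ => ?_⟩⟩
    by_cases h : Classical.arbitrary F = θ <;> simp [h]
  refine le_ciInf fun T => ?_
  obtain ⟨T, hT⟩ := T
  set A : F → Set X := fun θ => {x | T x = θ} with hA
  -- key inequality: ∑ (P θ (A θ)).toReal ≤ S ^ (1/l)
  have hmeas_p : ∀ θ : F, Measurable (p θ) := fun θ => Measure.measurable_rnDeriv _ _
  set g : X → ℝ≥0∞ := fun x => ∑ θ, (A θ).indicator (p θ) x with hg
  have hg_meas : Measurable g :=
    Finset.measurable_sum _ fun θ _ => (hmeas_p θ).indicator (hT θ)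
  have hg_eq : ∀ x, g x = p (T x) x := by
    intro x
    rw [hg]
    refine Finset.sum_eq_single_of_mem (T x) (Finset.mem_univ _) (fun θ _ hθ => ?_) |>.trans ?_
    · exact Set.indicator_of_notMem (fun hx => hθ (Set.mem_setOf.mp hx).symm) _
    · exact Set.indicator_of_mem (show x ∈ A (T x) from rfl) (p (T x))
  -- step 1 : ∫⁻ g = ∑ P θ (A θ)
  have h1 : ∫⁻ x, g x ∂Q = ∑ θ, P θ (A θ) := by
    rw [hg, lintegral_finset_sum _ fun θ _ => (hmeas_p θ).indicator (hT θ)]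
    refine Finset.sum_congr rfl fun θ _ => ?_
    rw [lintegral_indicator (hT θ) _, Measure.setLIntegral_rnDeriv (hAC θ)]
  -- step 2 : ∫⁻ g^l ≤ ofReal S
  have h2 : ∫⁻ x, g x ^ l ∂Q ≤ ENNReal.ofReal S := by
    have heq : ∀ x, g x ^ l = ∑ θ, (A θ).indicator (fun y => p θ y ^ l) x := by
      intro x
      rw [hg_eq]
      refine Eq.symm ?_
      refine Finset.sum_eq_single_of_mem (T x) (Finset.mem_univ _) (fun θ _ hθ => ?_) |>.trans ?_
      · exact Set.indicator_of_notMem (fun hx => hθ (Set.mem_setOf.mp hx).symm) _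
      · exact Set.indicator_of_mem (show x ∈ A (T x) from rfl) (fun y => p (T x) y ^ l)
    calc ∫⁻ x, g x ^ l ∂Q
        = ∑ θ, ∫⁻ x in A θ, p θ x ^ l ∂Q := by
          simp_rw [heq]
          rw [lintegral_finset_sum _ fun θ _ =>
            ((hmeas_p θ).pow_const l).indicator (hT θ)]
          exact Finset.sum_congr rfl fun θ _ => lintegral_indicator (hT θ) _
      _ ≤ ∑ θ, ∫⁻ x, p θ x ^ l ∂Q :=
          Finset.sum_le_sum fun θ _ => setLIntegral_le_lintegral _ _
      _ = ENNReal.ofReal S := by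
          rw [Finset.sum_congr rfl fun θ _ => hlint θ,
            ← ENNReal.ofReal_sum_of_nonneg fun θ _ => hSθ_nonneg θ]
  -- Hölder with conjugate exponent, second function = 1
  have hpq : l.HolderConjugate (l / (l - 1)) :=
    (Real.holderConjugate_iff_eq_conjExponent hl).2 rfl
  have hHolder : ∫⁻ x, g x ∂Q ≤ (∫⁻ x, g x ^ l ∂Q) ^ (1 / l) := by
    have := ENNReal.lintegral_mul_le_Lp_mul_Lq Q hpq hg_meas.aemeasurable
      (aemeasurable_const : AEMeasurable (fun _ : X => (1:ℝ≥0∞)) Q)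
    simp only [Pi.mul_apply, mul_one, ENNReal.one_rpow, lintegral_const,
      measure_univ, ENNReal.one_rpow, one_mul] at this
    exact this
  have hkey : (∑ θ, (P θ (A θ)).toReal) ≤ S ^ (1 / l) := by
    have hfin : (ENNReal.ofReal S) ^ (1 / l) ≠ ∞ :=
      ENNReal.rpow_ne_top_of_nonneg (by positivity) ENNReal.ofReal_ne_top
    have hle : (∑ θ, P θ (A θ)) ≤ (ENNReal.ofReal S) ^ (1 / l) := by
      rw [← h1]
      exact hHolder.trans (ENNReal.rpow_le_rpow h2 (by positivity))
    have := ENNReal.toReal_mono hfin hle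
    rwa [ENNReal.toReal_sum (fun θ _ => measure_ne_top _ _), ← ENNReal.toReal_rpow,
      ENNReal.toReal_ofReal hS_nonneg] at this
  -- finish with real arithmetic
  have hcompl : ∀ θ : F, (P θ {x | T x ≠ θ}).toReal = 1 - (P θ (A θ)).toReal := by
    intro θ
    have := hPprob θ
    have h1 : {x | T x ≠ θ} = (A θ)ᶜ := rfl
    rw [h1, prob_compl_eq_one_sub (hT θ),
      ENNReal.toReal_sub_of_le prob_le_one ENNReal.one_ne_top, ENNReal.toReal_one]
  calc 1 - S ^ (1/l) / N ≤ 1 - N⁻¹ * ∑ θ, (P θ (A θ)).toReal := by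
        have : N⁻¹ * ∑ θ, (P θ (A θ)).toReal ≤ S ^ (1/l) / N := by
          rw [div_eq_inv_mul]
          exact mul_le_mul_of_nonneg_left hkey (by positivity)
        linarith
    _ = (Fintype.card F : ℝ)⁻¹ * ∑ θ, (P θ {x | T x ≠ θ}).toReal := by
        rw [Finset.sum_congr rfl fun θ _ => hcompl θ, Finset.sum_sub_distrib, ← hN]
        simp only [Finset.sum_const, Finset.card_univ, nsmul_eq_mul, mul_one]
        rw [← hN, mul_sub, mul_comm N⁻¹ N, mul_inv_cancel₀ hNpos.ne']
end

section
/- Let P₁ and P₂ be probability measures on a measurable space with total variation distance V. Then V ≤ √( 1 − exp( − inf_Q ( D(Q||P₁) + D(Q||P₂) ) ) ), where the infimum is over all probability measures Q and D denotes the Kullback-Leibler divergence. -/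
open MeasureTheory Real
open scoped ENNReal NNReal
set_option maxHeartbeats 2000000

/-- The Kullback-Leibler divergence `D(P‖Q) = ∫ (dP/dQ) log(dP/dQ) dQ` (real-valued;
meaningful when `P ≪ Q` and the integrand is integrable, in which case it agrees with the
usual definition; otherwise the usual `D` is `+∞` and the bound is trivially true). -/
noncomputable def klDivR {X : Type*} [MeasurableSpace X] (P Q : Measure X) : ℝ :=
  ∫ x, ((P.rnDeriv Q x).toReal) * Real.log ((P.rnDeriv Q x).toReal) ∂Q

private lemma sqrt_mul_le_half_add {a b : ℝ} (ha : 0 ≤ a) (hb : 0 ≤ b) :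
    Real.sqrt (a * b) ≤ (a + b) / 2 := by
  nlinarith [sq_nonneg (Real.sqrt a - Real.sqrt b), Real.sq_sqrt ha, Real.sq_sqrt hb,
    Real.sqrt_nonneg a, Real.sqrt_nonneg b, Real.sqrt_mul ha b, Real.sqrt_nonneg (a * b)]

private lemma exp_integral_le_integral_exp {X : Type*} [MeasurableSpace X] (Q : Measure X)
    [IsProbabilityMeasure Q] {h : X → ℝ} (hi : Integrable h Q)
    (hei : Integrable (fun x => Real.exp (h x)) Q) :
    Real.exp (∫ x, h x ∂Q) ≤ ∫ x, Real.exp (h x) ∂Q :=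
  convexOn_exp.map_integral_le continuous_exp.continuousOn isClosed_univ
    (Filter.Eventually.of_forall fun _ => Set.mem_univ _) hi hei

/-- reverse Kullback-Leibler, inequality (13): for probability measures
`P₁, P₂` with total variation distance `V`,
`V ≤ √(1 - exp(-inf_Q (D(Q‖P₁) + D(Q‖P₂))))`; since the right-hand side is increasing in
the exponent, the infimum over `Q` is expressed by universally quantifying over
probability measures `Q`. -/
theorem statement12 {X : Type*} [MeasurableSpace X] (μ : Measure X) [SigmaFinite μ]
    (p₁ p₂ : X → ℝ) (h₁m : Measurable p₁) (h₂m : Measurable p₂)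
    (h₁0 : ∀ x, 0 ≤ p₁ x) (h₂0 : ∀ x, 0 ≤ p₂ x)
    (P₁ P₂ : Measure X)
    (hP₁ : P₁ = μ.withDensity fun x => ENNReal.ofReal (p₁ x))
    (hP₂ : P₂ = μ.withDensity fun x => ENNReal.ofReal (p₂ x))
    [IsProbabilityMeasure P₁] [IsProbabilityMeasure P₂]
    (V : ℝ) (hV : V = 2⁻¹ * ∫ x, |p₁ x - p₂ x| ∂μ)
    (Q : Measure X) [IsProbabilityMeasure Q] (hQ₁ : Q ≪ P₁) (hQ₂ : Q ≪ P₂)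
    (hi₁ : Integrable (fun x => (Q.rnDeriv P₁ x).toReal * Real.log (Q.rnDeriv P₁ x).toReal) P₁)
    (hi₂ : Integrable (fun x => (Q.rnDeriv P₂ x).toReal * Real.log (Q.rnDeriv P₂ x).toReal) P₂) :
    V ≤ Real.sqrt (1 - Real.exp (-(klDivR Q P₁ + klDivR Q P₂))) := by
  have hP₁μ : P₁ ≪ μ := hP₁ ▸ withDensity_absolutelyContinuous μ _
  have hP₂μ : P₂ ≪ μ := hP₂ ▸ withDensity_absolutelyContinuous μ _
  have hQμ : Q ≪ μ := hQ₁.trans hP₁μ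
  set r₁ : X → ℝ := fun x => (Q.rnDeriv P₁ x).toReal with hr₁
  set r₂ : X → ℝ := fun x => (Q.rnDeriv P₂ x).toReal with hr₂
  set h : X → ℝ := fun x => -(2⁻¹ : ℝ) * (Real.log (r₁ x) + Real.log (r₂ x)) with hh
  set g : X → ℝ := fun x => Real.exp (h x) with hg
  -- measurability
  have hr₁m : Measurable r₁ := (Measure.measurable_rnDeriv Q P₁).ennreal_toReal
  have hr₂m : Measurable r₂ := (Measure.measurable_rnDeriv Q P₂).ennreal_toReal
  have hhm : Measurable h := (((hr₁m.log).add (hr₂m.log)).const_mul _)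
  have hgm : Measurable g := hhm.exp
  -- integrability of the logs wrt Q
  have hlog₁ : Integrable (fun x => Real.log (r₁ x)) Q := by
    rw [← integrable_rnDeriv_smul_iff hQ₁]
    simpa [smul_eq_mul] using hi₁
  have hlog₂ : Integrable (fun x => Real.log (r₂ x)) Q := by
    rw [← integrable_rnDeriv_smul_iff hQ₂]
    simpa [smul_eq_mul] using hi₂
  have hhint : Integrable h Q := (hlog₁.add hlog₂).const_mul _
  -- integrability of the inverses wrt Q
  have hinv₁ : Integrable (fun x => (r₁ x)⁻¹) Q := by
    rw [← integrable_rnDeriv_smul_iff hQ₁]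
    refine (integrable_const (1 : ℝ)).mono' ((hr₁m.mul hr₁m.inv).aestronglyMeasurable) ?_
    · refine Filter.Eventually.of_forall fun x => ?_
      simp only [smul_eq_mul]
      rcases eq_or_ne (r₁ x) 0 with hx | hx
      · simp [hx]
      · rw [mul_inv_cancel₀ hx]; simp
  have hinv₂ : Integrable (fun x => (r₂ x)⁻¹) Q := by
    rw [← integrable_rnDeriv_smul_iff hQ₂]
    refine (integrable_const (1 : ℝ)).mono' ((hr₂m.mul hr₂m.inv).aestronglyMeasurable) ?_
    · refine Filter.Eventually.of_forall fun x => ?_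
      simp only [smul_eq_mul]
      rcases eq_or_ne (r₂ x) 0 with hx | hx
      · simp [hx]
      · rw [mul_inv_cancel₀ hx]; simp
  -- a.e.-Q positivity and finiteness of the rnDerivs
  have haeQ₁ : ∀ᵐ x ∂Q, 0 < r₁ x := by
    filter_upwards [Measure.rnDeriv_pos hQ₁, hQ₁.ae_le (Measure.rnDeriv_lt_top Q P₁)]
      with x hx hx'
    exact ENNReal.toReal_pos hx.ne' hx'.ne
  have haeQ₂ : ∀ᵐ x ∂Q, 0 < r₂ x := by
    filter_upwards [Measure.rnDeriv_pos hQ₂, hQ₂.ae_le (Measure.rnDeriv_lt_top Q P₂)]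
      with x hx hx'
    exact ENNReal.toReal_pos hx.ne' hx'.ne
  -- the key pointwise formula for g where the derivatives are positive
  have hgval : ∀ x, 0 < r₁ x → 0 < r₂ x → g x = Real.sqrt ((r₁ x)⁻¹ * (r₂ x)⁻¹) := by
    intro x h1 h2
    have hpos : (0 : ℝ) < (r₁ x)⁻¹ * (r₂ x)⁻¹ := by positivity
    have h3 : h x = Real.log ((r₁ x)⁻¹ * (r₂ x)⁻¹) / 2 := by
      simp only [hh, Real.log_mul (inv_pos.mpr h1).ne' (inv_pos.mpr h2).ne', Real.log_inv]
      ring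
    simp only [hg, h3, Real.exp_half, Real.exp_log hpos]
  -- integrability of g wrt Q
  have hgint : Integrable g Q := by
    refine ((hinv₁.add hinv₂).div_const 2).mono' hgm.aestronglyMeasurable ?_
    filter_upwards [haeQ₁, haeQ₂] with x h1 h2
    rw [Real.norm_eq_abs, hgval x h1 h2, abs_of_nonneg (Real.sqrt_nonneg _)]
    simp only [Pi.add_apply]
    exact sqrt_mul_le_half_add (by positivity) (by positivity)
  -- Jensen
  have hJ : Real.exp (∫ x, h x ∂Q) ≤ ∫ x, g x ∂Q :=
    exp_integral_le_integral_exp Q hhint hgint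
  -- the integral of h is -(1/2) of the sum of divergences
  have hD₁ : ∫ x, Real.log (r₁ x) ∂Q = klDivR Q P₁ := by
    rw [klDivR, ← integral_rnDeriv_smul hQ₁ (f := fun x => Real.log (r₁ x))]
    simp [smul_eq_mul]
    rfl
  have hD₂ : ∫ x, Real.log (r₂ x) ∂Q = klDivR Q P₂ := by
    rw [klDivR, ← integral_rnDeriv_smul hQ₂ (f := fun x => Real.log (r₂ x))]
    simp [smul_eq_mul]
    rfl
  have hinth : ∫ x, h x ∂Q = -(2⁻¹ : ℝ) * (klDivR Q P₁ + klDivR Q P₂) := by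
    rw [hh]
    rw [integral_const_mul, integral_add hlog₁ hlog₂, hD₁, hD₂]
  -- ∫ g dQ ≤ B := ∫ √(p₁ p₂) dμ
  set B : ℝ := ∫ x, Real.sqrt (p₁ x * p₂ x) ∂μ with hB
  -- integrability of p₁, p₂ wrt μ
  have hl₁ : ∫⁻ x, ENNReal.ofReal (p₁ x) ∂μ = 1 := by
    have := measure_univ (μ := P₁)
    rwa [hP₁, withDensity_apply _ MeasurableSet.univ, setLIntegral_univ] at this
  have hl₂ : ∫⁻ x, ENNReal.ofReal (p₂ x) ∂μ = 1 := by
    have := measure_univ (μ := P₂)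
    rwa [hP₂, withDensity_apply _ MeasurableSet.univ, setLIntegral_univ] at this
  have hint₁ : Integrable p₁ μ := by
    refine ⟨h₁m.aestronglyMeasurable, ?_⟩
    rw [hasFiniteIntegral_iff_ofReal (Filter.Eventually.of_forall h₁0), hl₁]
    exact ENNReal.one_lt_top
  have hint₂ : Integrable p₂ μ := by
    refine ⟨h₂m.aestronglyMeasurable, ?_⟩
    rw [hasFiniteIntegral_iff_ofReal (Filter.Eventually.of_forall h₂0), hl₂]
    exact ENNReal.one_lt_top
  have hI₁ : ∫ x, p₁ x ∂μ = 1 := by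
    rw [integral_eq_lintegral_of_nonneg_ae (Filter.Eventually.of_forall h₁0)
      h₁m.aestronglyMeasurable, hl₁, ENNReal.toReal_one]
  have hI₂ : ∫ x, p₂ x ∂μ = 1 := by
    rw [integral_eq_lintegral_of_nonneg_ae (Filter.Eventually.of_forall h₂0)
      h₂m.aestronglyMeasurable, hl₂, ENNReal.toReal_one]
  have habs : Integrable (fun x => |p₁ x - p₂ x|) μ := (hint₁.sub hint₂).abs
  have hIabs : ∫ x, |p₁ x - p₂ x| ∂μ = 2 * V := by rw [hV]; ring
  have hBint : Integrable (fun x => Real.sqrt (p₁ x * p₂ x)) μ := by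
    refine ((hint₁.add hint₂).div_const 2).mono'
      ((h₁m.mul h₂m).sqrt.aestronglyMeasurable) ?_
    refine Filter.Eventually.of_forall fun x => ?_
    rw [Real.norm_eq_abs, abs_of_nonneg (Real.sqrt_nonneg _)]
    simp only [Pi.add_apply]
    exact sqrt_mul_le_half_add (h₁0 x) (h₂0 x)
  have hgB : ∫ x, g x ∂Q ≤ B := by
    rw [← integral_rnDeriv_smul hQμ (f := g)]
    refine integral_mono_of_nonneg ?_ hBint ?_
    · exact Filter.Eventually.of_forall fun x => by
        simp only [smul_eq_mul]
        exact mul_nonneg ENNReal.toReal_nonneg (Real.exp_nonneg _)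
    · have E₁ := Measure.rnDeriv_mul_rnDeriv (κ := μ) hQ₁
      have E₂ := Measure.rnDeriv_mul_rnDeriv (κ := μ) hQ₂
      have d₁ : P₁.rnDeriv μ =ᵐ[μ] fun x => ENNReal.ofReal (p₁ x) :=
        hP₁ ▸ Measure.rnDeriv_withDensity μ h₁m.ennreal_ofReal
      have d₂ : P₂.rnDeriv μ =ᵐ[μ] fun x => ENNReal.ofReal (p₂ x) :=
        hP₂ ▸ Measure.rnDeriv_withDensity μ h₂m.ennreal_ofReal
      filter_upwards [E₁, E₂, d₁, d₂, Measure.rnDeriv_lt_top Q μ]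
        with x e₁ e₂ hd₁ hd₂ hfin
      simp only [Pi.mul_apply] at e₁ e₂
      rw [hd₁] at e₁
      rw [hd₂] at e₂
      set q : ℝ := (Q.rnDeriv μ x).toReal with hq
      rcases eq_or_ne (Q.rnDeriv μ x) 0 with hq0 | hq0
      · simp only [smul_eq_mul, hq, hq0, ENNReal.toReal_zero, zero_mul]
        exact Real.sqrt_nonneg _
      · -- positive case
        have hqpos : 0 < q := ENNReal.toReal_pos hq0 hfin.ne
        have hp₁pos : 0 < p₁ x := by
          rcases eq_or_lt_of_le (h₁0 x) with hp | hp
          · exfalso; apply hq0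
            rw [← e₁, ← hp, ENNReal.ofReal_zero, mul_zero]
          · exact hp
        have hp₂pos : 0 < p₂ x := by
          rcases eq_or_lt_of_le (h₂0 x) with hp | hp
          · exfalso; apply hq0
            rw [← e₂, ← hp, ENNReal.ofReal_zero, mul_zero]
          · exact hp
        have hR₁fin : Q.rnDeriv P₁ x ≠ ∞ := by
          intro hR
          rw [hR, ENNReal.top_mul (ENNReal.ofReal_pos.mpr hp₁pos).ne'] at e₁
          exact hfin.ne e₁.symm
        have hR₂fin : Q.rnDeriv P₂ x ≠ ∞ := by
          intro hR
          rw [hR, ENNReal.top_mul (ENNReal.ofReal_pos.mpr hp₂pos).ne'] at e₂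
          exact hfin.ne e₂.symm
        have hr₁x : r₁ x * p₁ x = q := by
          show (Q.rnDeriv P₁ x).toReal * p₁ x = (Q.rnDeriv μ x).toReal
          rw [← e₁, ENNReal.toReal_mul, ENNReal.toReal_ofReal (h₁0 x)]
        have hr₂x : r₂ x * p₂ x = q := by
          show (Q.rnDeriv P₂ x).toReal * p₂ x = (Q.rnDeriv μ x).toReal
          rw [← e₂, ENNReal.toReal_mul, ENNReal.toReal_ofReal (h₂0 x)]
        have hr₁pos : 0 < r₁ x := by
          nlinarith [hqpos, hp₁pos, hr₁x, (ENNReal.toReal_nonneg : (0:ℝ) ≤ r₁ x)]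
        have hr₂pos : 0 < r₂ x := by
          nlinarith [hqpos, hp₂pos, hr₂x, (ENNReal.toReal_nonneg : (0:ℝ) ≤ r₂ x)]
        have hr₁v : (r₁ x)⁻¹ = p₁ x / q := by
          have hv : r₁ x = q / p₁ x := by rw [eq_div_iff hp₁pos.ne']; exact hr₁x
          rw [hv, inv_div]
        have hr₂v : (r₂ x)⁻¹ = p₂ x / q := by
          have hv : r₂ x = q / p₂ x := by rw [eq_div_iff hp₂pos.ne']; exact hr₂x
          rw [hv, inv_div]
        rw [smul_eq_mul, hgval x hr₁pos hr₂pos, hr₁v, hr₂v]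
        have hq2 : p₁ x / q * (p₂ x / q) = (p₁ x * p₂ x) / q ^ 2 := by ring
        rw [hq2, Real.sqrt_div (by positivity) _, Real.sqrt_sq hqpos.le, mul_comm,
          div_mul_cancel₀ _ hqpos.ne']
  -- min/max integrals
  have hmin_eq : ∀ x, min (p₁ x) (p₂ x) = 2⁻¹ * (p₁ x + p₂ x - |p₁ x - p₂ x|) := by
    intro x
    rcases le_total (p₁ x) (p₂ x) with hx | hx
    · rw [min_eq_left hx, abs_of_nonpos (by linarith)]; ring
    · rw [min_eq_right hx, abs_of_nonneg (by linarith)]; ring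
  have hmax_eq : ∀ x, max (p₁ x) (p₂ x) = 2⁻¹ * (p₁ x + p₂ x + |p₁ x - p₂ x|) := by
    intro x
    rcases le_total (p₁ x) (p₂ x) with hx | hx
    · rw [max_eq_right hx, abs_of_nonpos (by linarith)]; ring
    · rw [max_eq_left hx, abs_of_nonneg (by linarith)]; ring
  have hminint : Integrable (fun x => min (p₁ x) (p₂ x)) μ := by
    refine (((hint₁.add hint₂).sub habs).const_mul 2⁻¹).congr ?_
    exact Filter.Eventually.of_forall fun x => (hmin_eq x).symm
  have hmaxint : Integrable (fun x => max (p₁ x) (p₂ x)) μ := by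
    refine (((hint₁.add hint₂).add habs).const_mul 2⁻¹).congr ?_
    exact Filter.Eventually.of_forall fun x => (hmax_eq x).symm
  have hadd : Integrable (fun x => p₁ x + p₂ x) μ := hint₁.add hint₂
  have hImin : ∫ x, min (p₁ x) (p₂ x) ∂μ = 1 - V := by
    rw [show (fun x => min (p₁ x) (p₂ x))
        = fun x => 2⁻¹ * (p₁ x + p₂ x - |p₁ x - p₂ x|) from funext hmin_eq]
    rw [integral_const_mul, integral_sub hadd habs, integral_add hint₁ hint₂,
      hI₁, hI₂, hIabs]
    ring
  have hImax : ∫ x, max (p₁ x) (p₂ x) ∂μ = 1 + V := by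
    rw [show (fun x => max (p₁ x) (p₂ x))
        = fun x => 2⁻¹ * (p₁ x + p₂ x + |p₁ x - p₂ x|) from funext hmax_eq]
    rw [integral_const_mul, integral_add hadd habs, integral_add hint₁ hint₂,
      hI₁, hI₂, hIabs]
    ring
  have hV0 : 0 ≤ V := by
    rw [hV]
    have : 0 ≤ ∫ x, |p₁ x - p₂ x| ∂μ := integral_nonneg fun x => abs_nonneg _
    positivity
  have hV1 : V ≤ 1 := by
    have h0 : 0 ≤ ∫ x, min (p₁ x) (p₂ x) ∂μ :=
      integral_nonneg fun x => le_min (h₁0 x) (h₂0 x)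
    linarith [hImin ▸ h0]
  have hB0 : 0 ≤ B := integral_nonneg fun x => Real.sqrt_nonneg _
  -- B² ≤ 1 - V²
  have hB2 : B ^ 2 ≤ 1 - V ^ 2 := by
    rcases eq_or_lt_of_le hV1 with hV1' | hV1'
    · -- V = 1 : min is a.e. zero, so B = 0
      have hmin0 : ∫ x, min (p₁ x) (p₂ x) ∂μ = 0 := by rw [hImin, hV1']; ring
      have hminae : (fun x => min (p₁ x) (p₂ x)) =ᵐ[μ] 0 :=
        (integral_eq_zero_iff_of_nonneg (fun x => le_min (h₁0 x) (h₂0 x)) hminint).mp hmin0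
      have hBz : B = 0 := by
        rw [hB]
        rw [integral_eq_zero_iff_of_nonneg (fun x => Real.sqrt_nonneg _) hBint]
        filter_upwards [hminae] with x hx
        simp only [Pi.zero_apply] at hx ⊢
        rcases le_total (p₁ x) (p₂ x) with hle | hle
        · rw [min_eq_left hle] at hx
          rw [hx, zero_mul, Real.sqrt_zero]
        · rw [min_eq_right hle] at hx
          rw [hx, mul_zero, Real.sqrt_zero]
      rw [hBz, hV1']
      norm_num
    · -- V < 1
      set m : ℝ := 1 - V with hm
      set M : ℝ := 1 + V with hM
      have hmpos : 0 < m := by simp [hm]; linarith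
      have hMpos : 0 < M := by simp [hM]; linarith
      set t : ℝ := Real.sqrt (M / m) with ht
      have htpos : 0 < t := Real.sqrt_pos.mpr (by positivity)
      have ht2 : t ^ 2 = M / m := Real.sq_sqrt (by positivity)
      have hBle : B ≤ (t * m + M / t) / 2 := by
        have hm1 : Integrable (fun x => t * min (p₁ x) (p₂ x)) μ := hminint.const_mul t
        have hm2 : Integrable (fun x => max (p₁ x) (p₂ x) / t) μ := hmaxint.div_const t
        have hm12 : Integrable
            (fun x => t * min (p₁ x) (p₂ x) + max (p₁ x) (p₂ x) / t) μ := hm1.add hm2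
        have hptw : ∀ x, Real.sqrt (p₁ x * p₂ x)
            ≤ (t * min (p₁ x) (p₂ x) + max (p₁ x) (p₂ x) / t) / 2 := by
          intro x
          have hmm : min (p₁ x) (p₂ x) * max (p₁ x) (p₂ x) = p₁ x * p₂ x := by
            rcases le_total (p₁ x) (p₂ x) with hle | hle
            · rw [min_eq_left hle, max_eq_right hle]
            · rw [min_eq_right hle, max_eq_left hle]; ring
          have h1 : (t * min (p₁ x) (p₂ x)) * (max (p₁ x) (p₂ x) / t) = p₁ x * p₂ x := by
            field_simp
            linear_combination hmm
          rw [← h1]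
          exact sqrt_mul_le_half_add (mul_nonneg htpos.le (le_min (h₁0 x) (h₂0 x)))
            (div_nonneg ((h₁0 x).trans (le_max_left _ _)) htpos.le)
        calc B ≤ ∫ x, (t * min (p₁ x) (p₂ x) + max (p₁ x) (p₂ x) / t) / 2 ∂μ := by
              refine integral_mono hBint (hm12.div_const 2) hptw
          _ = (t * (1 - V) + (1 + V) / t) / 2 := by
              rw [integral_div, integral_add hm1 hm2,
                integral_const_mul, integral_div, hImin, hImax]
          _ = (t * m + M / t) / 2 := by rw [hm, hM]
      have key : (t * m + M / t) ^ 2 = 4 * (m * M) := by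
        have ht0 : t ≠ 0 := htpos.ne'
        field_simp
        have : t ^ 2 * m = M := by
          rw [ht2]; field_simp
        nlinarith [this]
      have : B ^ 2 ≤ m * M := by nlinarith [hBle, hB0, htpos, hmpos, hMpos]
      calc B ^ 2 ≤ m * M := this
        _ = 1 - V ^ 2 := by rw [hm, hM]; ring
  -- conclusion
  have hexp : Real.exp (-(klDivR Q P₁ + klDivR Q P₂)) ≤ B ^ 2 := by
    have h1 : Real.exp (∫ x, h x ∂Q) ≤ B := hJ.trans hgB
    have h2 : (0:ℝ) < Real.exp (∫ x, h x ∂Q) := Real.exp_pos _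
    have h3 : Real.exp (-(klDivR Q P₁ + klDivR Q P₂))
        = (Real.exp (∫ x, h x ∂Q)) ^ 2 := by
      rw [hinth, sq, ← Real.exp_add]
      congr 1
      ring
    rw [h3]
    nlinarith [h1, h2, hB0]
  have hfinal : V ^ 2 ≤ 1 - Real.exp (-(klDivR Q P₁ + klDivR Q P₂)) := by
    nlinarith [hexp, hB2]
  rw [Real.le_sqrt hV0 (by nlinarith [Real.exp_pos (-(klDivR Q P₁ + klDivR Q P₂)), hV1] : (0:ℝ) ≤ 1 - Real.exp (-(klDivR Q P₁ + klDivR Q P₂)))]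
  exact hfinal
end

section
/- Let F be a finite set of cardinality N and let P_θ, θ∈F, be probability measures on a measurable space 𝒳 dominated by a σ-finite measure μ with densities p_θ. Let G be a finite set of cardinality M, let Q_α, α∈G, be probability measures on 𝒳 with densities q_α with respect to μ, and let j: F → G be any map. Then for every convex function f:[0,∞)→ℝ with f(1)=0: J_f := inf_Q (1/N) Σ_{θ∈F} D_f(P_θ||Q) ≤ (1/N) Σ_{θ∈F} ∫_𝒳 (q_{j(θ)}/M) · f( M·p_θ / q_{j(θ)} ) dμ + (1 − 1/M)·f(0), where the infimum defining J_f is over all probability measures Q on 𝒳. -/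
open MeasureTheory Real
open scoped ENNReal NNReal Topology

lemma aux_subgradient (f : ℝ → ℝ) (hf : ConvexOn ℝ (Set.Ici 0) f) (hf1 : f 1 = 0) :
    ∃ c : ℝ, ∀ t, 0 ≤ t → c * (t - 1) ≤ f t := by
  set S : Set ℝ := (fun s => (f 1 - f s) / (1 - s)) '' Set.Ico 0 1 with hS
  have hne : S.Nonempty := ⟨_, ⟨0, ⟨le_rfl, one_pos⟩, rfl⟩⟩
  have hub : ∀ t : ℝ, 1 < t → ∀ y ∈ S, y ≤ (f t - f 1) / (t - 1) := by
    rintro t ht y ⟨s, ⟨hs0, hs1⟩, rfl⟩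
    exact hf.slope_mono_adjacent hs0 (le_trans zero_le_one ht.le) hs1 ht
  have hbdd : BddAbove S := ⟨(f 2 - f 1) / (2 - 1), fun y hy => hub 2 one_lt_two y hy⟩
  refine ⟨sSup S, fun t ht => ?_⟩
  rcases lt_trichotomy t 1 with h | h | h
  · have hmem : (f 1 - f t) / (1 - t) ∈ S := ⟨t, ⟨ht, h⟩, rfl⟩
    have hle : (f 1 - f t) / (1 - t) ≤ sSup S := le_csSup hbdd hmem
    have h1t : 0 < 1 - t := by linarith
    rw [div_le_iff₀ h1t, hf1] at hle
    nlinarith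
  · subst h; simp [hf1]
  · have hle : sSup S ≤ (f t - f 1) / (t - 1) := csSup_le hne (hub t h)
    have h1t : 0 < t - 1 := by linarith
    rw [le_div_iff₀ h1t, hf1] at hle
    nlinarith

lemma aux_perspective (f : ℝ → ℝ) (hf : ConvexOn ℝ (Set.Ici 0) f) {a b r : ℝ}
    (ha : 0 ≤ a) (hb : 0 < b) (hr : 0 ≤ r) :
    (b + r) * f (a / (b + r)) ≤ b * f (a / b) + r * f 0 := by
  have hbr : 0 < b + r := by linarith
  have key := hf.2 (Set.mem_Ici.2 (div_nonneg ha hb.le)) (Set.mem_Ici.2 (le_refl (0:ℝ)))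
    (div_nonneg hb.le hbr.le) (div_nonneg hr hbr.le) (by field_simp)
  simp only [smul_eq_mul] at key
  have harg : b / (b + r) * (a / b) + r / (b + r) * 0 = a / (b + r) := by
    field_simp; ring
  rw [harg] at key
  have h2 : (b + r) * (b / (b + r) * f (a / b) + r / (b + r) * f 0)
      = b * f (a / b) + r * f 0 := by field_simp
  nlinarith [mul_le_mul_of_nonneg_left key hbr.le, h2]

lemma aux_fm_meas (f : ℝ → ℝ) (hf : ConvexOn ℝ (Set.Ici 0) f) :
    Measurable (fun t : ℝ => if t ≤ 0 then f 0 else f t) := by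
  apply measurable_of_continuousOn_compl_singleton (0 : ℝ)
  intro t ht
  apply ContinuousAt.continuousWithinAt
  rcases lt_or_gt_of_ne (show t ≠ 0 from ht) with h | h
  · have he : (fun t' : ℝ => if t' ≤ 0 then f 0 else f t') =ᶠ[𝓝 t] fun _ => f 0 := by
      filter_upwards [Iio_mem_nhds h] with y hy
      simp [le_of_lt (Set.mem_Iio.1 hy)]
    exact continuousAt_const.congr he.symm
  · have hc : ContinuousOn f (Set.Ioi 0) :=
      ConvexOn.continuousOn isOpen_Ioi (hf.subset (Set.Ioi_subset_Ici le_rfl) (convex_Ioi 0))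
    have hca : ContinuousAt f t := hc.continuousAt (Ioi_mem_nhds h)
    have he : (fun t' : ℝ => if t' ≤ 0 then f 0 else f t') =ᶠ[𝓝 t] f := by
      filter_upwards [Ioi_mem_nhds h] with y hy
      simp [not_le.2 (Set.mem_Ioi.1 hy)]
    exact hca.congr he.symm

/-- density of a prob measure: integrable with integral 1 -/
lemma aux_dens {X : Type*} [MeasurableSpace X] (μ : Measure X) (g : X → ℝ)
    (hm : Measurable g) (hnn : ∀ x, 0 ≤ g x)
    (hprob : IsProbabilityMeasure (μ.withDensity (fun x => ENNReal.ofReal (g x)))) :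
    Integrable g μ ∧ ∫ x, g x ∂μ = 1 := by
  have h1 : ∫⁻ x, ENNReal.ofReal (g x) ∂μ = 1 := by
    have h := hprob.measure_univ
    rwa [withDensity_apply _ MeasurableSet.univ, setLIntegral_univ] at h
  have hint : Integrable g μ := by
    refine ⟨hm.aestronglyMeasurable, ?_⟩
    rw [hasFiniteIntegral_iff_ofReal (.of_forall hnn), h1]
    exact ENNReal.one_lt_top
  refine ⟨hint, ?_⟩
  rw [integral_eq_lintegral_of_nonneg_ae (.of_forall hnn) hm.aestronglyMeasurable, h1]
  simp

/-- Theorem 2: for probability measures `Q_α, α ∈ G` with densities `q_α`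
and any map `j : F → G`,
`J_f = inf_Q (1/N) Σ_θ D_f(P_θ‖Q) ≤ (1/N) Σ_θ ∫ (q_{j θ}/M) f(M p_θ/q_{j θ}) dμ + (1-1/M) f 0`.
The absolute continuity hypothesis `hACj` restricts to the case where the right-hand side is
finite (otherwise it is `+∞` and the bound is trivial). -/
theorem statement13 {X F G : Type*} [MeasurableSpace X] [Fintype F] [Nonempty F] [Fintype G]
    (μ : Measure X) [SigmaFinite μ]
    (p : F → X → ℝ) (hp_meas : ∀ θ, Measurable (p θ)) (hp_nonneg : ∀ θ x, 0 ≤ p θ x)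
    (P : F → Measure X)
    (hP : ∀ θ, P θ = μ.withDensity (fun x => ENNReal.ofReal (p θ x)))
    (hPprob : ∀ θ, IsProbabilityMeasure (P θ))
    (q : G → X → ℝ) (hq_meas : ∀ α, Measurable (q α)) (hq_nonneg : ∀ α x, 0 ≤ q α x)
    (Qm : G → Measure X)
    (hQ : ∀ α, Qm α = μ.withDensity (fun x => ENNReal.ofReal (q α x)))
    (hQprob : ∀ α, IsProbabilityMeasure (Qm α))
    (j : F → G)
    (f : ℝ → ℝ) (hf : ConvexOn ℝ (Set.Ici 0) f) (hf1 : f 1 = 0)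
    (N M : ℝ) (hN : N = Fintype.card F) (hM : M = Fintype.card G)
    (hACj : ∀ θ, ∀ᵐ x ∂μ, q (j θ) x = 0 → p θ x = 0)
    (hInt : ∀ θ, Integrable (fun x => q (j θ) x / M * f (M * p θ x / q (j θ) x)) μ) :
    (⨅ Q : {Q : Measure X // IsProbabilityMeasure Q}, N⁻¹ * ∑ θ, fDivR f (P θ) Q.1) ≤
      N⁻¹ * (∑ θ, ∫ x, q (j θ) x / M * f (M * p θ x / q (j θ) x) ∂μ) +
        (1 - 1 / M) * f 0 := by
  classical
  haveI : Nonempty G := ⟨j (Classical.arbitrary F)⟩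
  have hMpos : (0:ℝ) < M := by rw [hM]; exact_mod_cast Fintype.card_pos
  have hNpos : (0:ℝ) < N := by rw [hN]; exact_mod_cast Fintype.card_pos
  obtain ⟨c, hc⟩ := aux_subgradient f hf hf1
  -- density facts
  have hqd : ∀ α, Integrable (q α) μ ∧ ∫ x, q α x ∂μ = 1 := fun α =>
    aux_dens μ (q α) (hq_meas α) (hq_nonneg α) (by rw [← hQ α]; exact hQprob α)
  have hpd : ∀ θ, Integrable (p θ) μ ∧ ∫ x, p θ x ∂μ = 1 := fun θ =>
    aux_dens μ (p θ) (hp_meas θ) (hp_nonneg θ) (by rw [← hP θ]; exact hPprob θ)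
  -- the mixture density
  set g : X → ℝ := fun x => (∑ α, q α x) / M with hg_def
  have hg_meas : Measurable g :=
    (Finset.measurable_sum Finset.univ fun α _ => hq_meas α).div_const M
  have hg_nonneg : ∀ x, 0 ≤ g x := fun x =>
    div_nonneg (Finset.sum_nonneg fun α _ => hq_nonneg α x) hMpos.le
  have hg_int : Integrable g μ :=
    (integrable_finset_sum Finset.univ fun α _ => (hqd α).1).div_const M
  have hg_int1 : ∫ x, g x ∂μ = 1 := by
    rw [hg_def]
    simp only [integral_div]
    rw [integral_finset_sum Finset.univ fun α _ => (hqd α).1]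
    have : ∀ α : G, ∫ x, q α x ∂μ = 1 := fun α => (hqd α).2
    simp only [this, Finset.sum_const, Finset.card_univ, nsmul_eq_mul, mul_one]
    rw [← hM]; field_simp
  have hqg : ∀ θ x, q (j θ) x / M ≤ g x := fun θ x => by
    show q (j θ) x / M ≤ (∑ α, q α x) / M
    gcongr
    exact Finset.single_le_sum (fun α _ => hq_nonneg α x) (Finset.mem_univ (j θ))
  -- the candidate measure
  set Gd : X → ℝ≥0∞ := fun x => ENNReal.ofReal (g x) with hGd
  set Q : Measure X := μ.withDensity Gd with hQdef
  have hGd_meas : Measurable Gd := ENNReal.measurable_ofReal.comp hg_meas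
  haveI hQprob' : IsProbabilityMeasure Q := by
    constructor
    rw [hQdef, withDensity_apply _ MeasurableSet.univ, setLIntegral_univ,
      ← ofReal_integral_eq_lintegral_ofReal hg_int (.of_forall hg_nonneg), hg_int1,
      ENNReal.ofReal_one]
  -- a.e. vanishing facts
  have hgz : ∀ θ, ∀ᵐ x ∂μ, g x = 0 → p θ x = 0 := fun θ => by
    filter_upwards [hACj θ] with x hx hgx
    apply hx
    have hsum : ∑ α, q α x = 0 := by
      rw [hg_def] at hgx
      simpa [div_eq_zero_iff, hMpos.ne'] using hgx
    have h1 : q (j θ) x ≤ 0 := by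
      rw [← hsum]
      exact Finset.single_le_sum (fun α _ => hq_nonneg α x) (Finset.mem_univ (j θ))
    exact le_antisymm h1 (hq_nonneg _ x)
  -- Radon-Nikodym derivative of P θ w.r.t. Q
  set h : F → X → ℝ≥0∞ := fun θ x => ENNReal.ofReal (p θ x) / Gd x with hh
  have h_meas : ∀ θ, Measurable (h θ) := fun θ =>
    (ENNReal.measurable_ofReal.comp (hp_meas θ)).div hGd_meas
  have hPQ : ∀ θ, P θ = Q.withDensity (h θ) := fun θ => by
    rw [hQdef, ← withDensity_mul _ hGd_meas (h_meas θ), hP θ]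
    apply withDensity_congr_ae
    filter_upwards [hgz θ] with x hx
    by_cases hgx : g x = 0
    · simp [hGd, hh, hgx, hx hgx]
    · have hGx0 : Gd x ≠ 0 := by
        simp only [hGd, ne_eq, ENNReal.ofReal_eq_zero, not_le]
        exact (hg_nonneg x).lt_of_ne (Ne.symm hgx)
      simp only [Pi.mul_apply, hh]
      rw [ENNReal.mul_div_cancel hGx0 ENNReal.ofReal_ne_top]
  have hrn : ∀ θ, (P θ).rnDeriv Q =ᵐ[Q] h θ := fun θ => by
    haveI := hPprob θ
    exact (Measure.eq_rnDeriv (μ := P θ) (ν := Q) (h_meas θ)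
      Measure.MutuallySingular.zero_left (by rw [zero_add, hPQ θ])).symm
  -- rewrite fDivR at Q as an integral over μ
  have hfDiv : ∀ θ, fDivR f (P θ) Q = ∫ x, g x * f (p θ x / g x) ∂μ := fun θ => by
    rw [fDivR]
    have e1 : ∫ x, f ((P θ).rnDeriv Q x).toReal ∂Q = ∫ x, f (p θ x / g x) ∂Q := by
      refine integral_congr_ae ?_
      filter_upwards [hrn θ] with x hx
      rw [hx, hh]
      simp only []
      rw [ENNReal.toReal_div, ENNReal.toReal_ofReal (hp_nonneg θ x), hGd,
        ENNReal.toReal_ofReal (hg_nonneg x)]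
    rw [e1, hQdef]
    have e2 : μ.withDensity Gd
        = μ.withDensity (fun x => ((g x).toNNReal : ℝ≥0∞)) := rfl
    rw [e2, integral_withDensity_eq_integral_smul hg_meas.real_toNNReal]
    refine integral_congr_ae (Filter.Eventually.of_forall fun x => ?_)
    show (g x).toNNReal • f (p θ x / g x) = g x * f (p θ x / g x)
    rw [NNReal.smul_def, Real.coe_toNNReal _ (hg_nonneg x), smul_eq_mul]
  -- pointwise upper bound
  have hsub_int : ∀ θ, Integrable (fun x => (g x - q (j θ) x / M) * f 0) μ := fun θ =>
    (hg_int.sub (((hqd (j θ)).1).div_const M)).mul_const (f 0)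
  have hU_int : ∀ θ, Integrable (fun x => q (j θ) x / M * f (M * p θ x / q (j θ) x) + (g x - q (j θ) x / M) * f 0) μ := fun θ =>
    (hInt θ).add (hsub_int θ)
  have hupper : ∀ θ, ∀ᵐ x ∂μ, g x * f (p θ x / g x) ≤ q (j θ) x / M * f (M * p θ x / q (j θ) x) + (g x - q (j θ) x / M) * f 0 := fun θ => by
    filter_upwards [hACj θ] with x hx
    by_cases hq0 : q (j θ) x = 0
    · have hp0 : p θ x = 0 := hx hq0
      by_cases hg0 : g x = 0
      · simp [hq0, hp0, hg0]
      · simp [hq0, hp0]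
    · have hqpos : 0 < q (j θ) x := (hq_nonneg _ x).lt_of_ne (Ne.symm hq0)
      have hb : 0 < q (j θ) x / M := div_pos hqpos hMpos
      have hr : 0 ≤ g x - q (j θ) x / M := sub_nonneg.2 (hqg θ x)
      have key := aux_perspective f hf (hp_nonneg θ x) hb hr
      have hbr : q (j θ) x / M + (g x - q (j θ) x / M) = g x := by ring
      rw [hbr] at key
      have harg : p θ x / (q (j θ) x / M) = M * p θ x / q (j θ) x := by
        rw [div_div_eq_mul_div, mul_comm]
      rw [harg] at key
      exact key
  -- pointwise lower bound
  have hlower : ∀ θ, ∀ᵐ x ∂μ, c * (p θ x - g x) ≤ g x * f (p θ x / g x) := fun θ => by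
    filter_upwards [hgz θ] with x hx
    by_cases hg0 : g x = 0
    · simp [hg0, hx hg0]
    · have hgpos : 0 < g x := (hg_nonneg x).lt_of_ne (Ne.symm hg0)
      have h1 := hc (p θ x / g x) (div_nonneg (hp_nonneg θ x) hgpos.le)
      have h2 := mul_le_mul_of_nonneg_left h1 hgpos.le
      calc c * (p θ x - g x) = g x * (c * (p θ x / g x - 1)) := by
            field_simp
        _ ≤ g x * f (p θ x / g x) := h2
  -- measurability and integrability of the LHS integrand
  have hL_int : ∀ θ, Integrable (fun x => g x * f (p θ x / g x)) μ := fun θ => by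
    have hmeq : (fun x => g x * f (p θ x / g x))
        = fun x => g x * (if p θ x / g x ≤ 0 then f 0 else f (p θ x / g x)) := by
      funext x
      rcases eq_or_lt_of_le (div_nonneg (hp_nonneg θ x) (hg_nonneg x)) with h0 | h0
      · rw [← h0]; simp
      · simp [not_le.2 h0]
    have hmeas : AEStronglyMeasurable (fun x => g x * f (p θ x / g x)) μ := by
      rw [hmeq]
      exact (hg_meas.mul ((aux_fm_meas f hf).comp ((hp_meas θ).div hg_meas))).aestronglyMeasurable
    refine Integrable.mono'
      (g := fun x => |c * (p θ x - g x)| + |q (j θ) x / M * f (M * p θ x / q (j θ) x) + (g x - q (j θ) x / M) * f 0|)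
      (((((hpd θ).1).sub hg_int).const_mul c).abs.add (hU_int θ).abs) hmeas ?_
    filter_upwards [hupper θ, hlower θ] with x h1 h2
    rw [Real.norm_eq_abs, abs_le]
    constructor
    · nlinarith [neg_abs_le (c * (p θ x - g x)), abs_nonneg (q (j θ) x / M * f (M * p θ x / q (j θ) x) + (g x - q (j θ) x / M) * f 0)]
    · nlinarith [le_abs_self (q (j θ) x / M * f (M * p θ x / q (j θ) x) + (g x - q (j θ) x / M) * f 0), abs_nonneg (c * (p θ x - g x))]
  -- the per-θ bound
  have hbound : ∀ θ, fDivR f (P θ) Q ≤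
      (∫ x, q (j θ) x / M * f (M * p θ x / q (j θ) x) ∂μ) + (1 - 1 / M) * f 0 := fun θ => by
    rw [hfDiv θ]
    refine (integral_mono_ae (hL_int θ) (hU_int θ) (hupper θ)).trans_eq ?_
    have hsub2 : Integrable (fun x => g x - q (j θ) x / M) μ :=
      hg_int.sub (((hqd (j θ)).1).div_const M)
    rw [integral_add (hInt θ) (hsub_int θ), integral_mul_const, integral_sub hg_int
      (((hqd (j θ)).1).div_const M), hg_int1, integral_div, (hqd (j θ)).2]
  -- lower bound on fDivR for arbitrary probability measures
  have hlb : ∀ (Q' : Measure X), IsProbabilityMeasure Q' → ∀ θ, -|c| ≤ fDivR f (P θ) Q' := by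
    intro Q' hQ' θ
    haveI := hQ'
    haveI := hPprob θ
    by_cases hint : Integrable (fun x => f ((P θ).rnDeriv Q' x).toReal) Q'
    · have hlt : ∫⁻ x, (P θ).rnDeriv Q' x ∂Q' ≤ 1 := by
        refine (Measure.lintegral_rnDeriv_le).trans_eq ?_
        exact measure_univ
      have hd_int : Integrable (fun x => ((P θ).rnDeriv Q' x).toReal) Q' :=
        integrable_toReal_of_lintegral_ne_top
          (Measure.measurable_rnDeriv _ _).aemeasurable
          (lt_of_le_of_lt hlt ENNReal.one_lt_top).ne
      have hI1 : ∫ x, ((P θ).rnDeriv Q' x).toReal ∂Q' ≤ 1 := by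
        rw [integral_toReal (Measure.measurable_rnDeriv _ _).aemeasurable
          (Measure.rnDeriv_lt_top _ _)]
        calc (∫⁻ x, (P θ).rnDeriv Q' x ∂Q').toReal ≤ (1 : ℝ≥0∞).toReal :=
              ENNReal.toReal_mono ENNReal.one_ne_top hlt
          _ = 1 := by simp
      have hI0 : 0 ≤ ∫ x, ((P θ).rnDeriv Q' x).toReal ∂Q' :=
        integral_nonneg fun x => ENNReal.toReal_nonneg
      have hmono : ∫ x, c * (((P θ).rnDeriv Q' x).toReal - 1) ∂Q'
          ≤ ∫ x, f ((P θ).rnDeriv Q' x).toReal ∂Q' :=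
        integral_mono ((hd_int.sub (integrable_const 1)).const_mul c) hint
          (fun x => hc _ ENNReal.toReal_nonneg)
      rw [integral_const_mul, integral_sub hd_int (integrable_const 1)] at hmono
      simp only [integral_const, probReal_univ, measure_univ, ENNReal.toReal_one, smul_eq_mul, one_mul] at hmono
      rw [fDivR]
      refine le_trans ?_ hmono
      rcases abs_cases c with ⟨hc1, _⟩ | ⟨hc1, _⟩ <;> nlinarith
    · rw [fDivR, integral_undef hint]
      exact neg_nonpos.2 (abs_nonneg c)
  -- put everything together
  have hstep : (⨅ Q'' : {Q : Measure X // IsProbabilityMeasure Q},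
      N⁻¹ * ∑ θ, fDivR f (P θ) Q''.1) ≤ N⁻¹ * ∑ θ, fDivR f (P θ) Q := by
    refine ciInf_le ⟨-|c|, ?_⟩ (⟨Q, hQprob'⟩ : {Q : Measure X // IsProbabilityMeasure Q})
    rintro y ⟨Q'', rfl⟩
    have hterm : ∀ θ : F, -|c| ≤ fDivR f (P θ) Q''.1 := hlb Q''.1 Q''.2
    have hsum : N * -|c| ≤ ∑ θ, fDivR f (P θ) Q''.1 := by
      have := Finset.sum_le_sum (fun θ (_ : θ ∈ Finset.univ) => hterm θ)
      simpa [Finset.sum_const, Finset.card_univ, nsmul_eq_mul, hN] using this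
    have := mul_le_mul_of_nonneg_left hsum (inv_nonneg.2 hNpos.le)
    calc -|c| = N⁻¹ * (N * -|c|) := by
          rw [← mul_assoc, inv_mul_cancel₀ hNpos.ne', one_mul]
      _ ≤ N⁻¹ * ∑ θ, fDivR f (P θ) Q''.1 := this
  refine hstep.trans ?_
  have hsum2 : ∑ θ, fDivR f (P θ) Q ≤
      (∑ θ, ∫ x, q (j θ) x / M * f (M * p θ x / q (j θ) x) ∂μ) + N * ((1 - 1 / M) * f 0) := by
    have := Finset.sum_le_sum (fun θ (_ : θ ∈ Finset.univ) => hbound θ)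
    rw [Finset.sum_add_distrib, Finset.sum_const, Finset.card_univ, nsmul_eq_mul, ← hN] at this
    exact this
  have := mul_le_mul_of_nonneg_left hsum2 (inv_nonneg.2 hNpos.le)
  refine this.trans_eq ?_
  field_simp
end

section
/- Consider an estimation problem with parameter space Θ, probability measures P_θ, θ∈Θ, on a measurable space 𝒳, an action space 𝒜 ⊇ Θ equipped with a metric ρ, and a nondecreasing loss ℓ:[0,∞)→[0,∞); the minimax risk is R := inf_{θ̂} sup_{θ∈Θ} E_{X∼P_θ} ℓ(ρ(θ, θ̂(X))), the infimum over all measurable maps θ̂: 𝒳 → 𝒜. Suppose there exist: (i) a finite subset F ⊆ Θ of cardinality |F| ≥ N with ρ(θ,θ') ≥ η for all distinct θ, θ' ∈ F, and (ii) a finite set G of cardinality |G| ≤ M and probability measures Q_α, α∈G, on 𝒳 with sup_{θ∈Θ} min_{α∈G} χ²(P_θ||Q_α) ≤ ε². Then R ≥ ℓ(η/2)·( 1 − 1/N − √( (1+ε²)·M / N ) ). -/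
open MeasureTheory Real
open scoped ENNReal NNReal

/-- The chi-squared divergence `χ²(P‖Q) = ∫ (dP/dQ)² dQ - 1` (real-valued; meaningful when
`P ≪ Q` and the integrand is integrable, in which case it agrees with the usual definition). -/
noncomputable def chiSqDivR {X : Type*} [MeasurableSpace X] (P Q : Measure X) : ℝ :=
  ∫ x, (((P.rnDeriv Q x).toReal) ^ 2 - 1) ∂Q

/-- Theorem 3, chi-squared version, inequality (23): if `Θ` contains an
`η`-separated subset of cardinality `≥ N` and the family `{P_a : a ∈ Θ}` admits an
`ε`-covering (in square-root chi-squared divergence) of cardinality `≤ M`, then the minimax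
risk satisfies `R ≥ ℓ(η/2)(1 - 1/N - √((1+ε²) M / N))`. The risk of an estimator `e` at
`a` is `∫ ℓ(ρ(a, e x)) dP_a x` (as a lower Lebesgue integral, so that infinite risks are
handled correctly). -/
theorem statement16 {X A : Type*} [MeasurableSpace X] [MeasurableSpace A] [MetricSpace A]
    [OpensMeasurableSpace A]
    (Θ : Set A) (P : A → Measure X) (hPprob : ∀ a ∈ Θ, IsProbabilityMeasure (P a))
    (ℓ : ℝ → ℝ) (hℓ_nonneg : ∀ t, 0 ≤ ℓ t) (hℓ_mono : MonotoneOn ℓ (Set.Ici 0))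
    (η : ℝ) (hη : 0 < η) (ε : ℝ) (N M : ℝ) (hN : 0 < N) (hM : 0 ≤ M)
    -- (i) an `η`-separated subset of `Θ` of cardinality at least `N`
    (Fs : Finset A) (hFsub : ↑Fs ⊆ Θ) (hFcard : N ≤ Fs.card)
    (hFsep : ∀ a ∈ Fs, ∀ b ∈ Fs, a ≠ b → η ≤ dist a b)
    -- (ii) an `ε`-covering of `{P_a : a ∈ Θ}` of cardinality at most `M`
    {ι : Type*} [Fintype ι] (Q : ι → Measure X) (hQprob : ∀ i, IsProbabilityMeasure (Q i))
    (hGcard : (Fintype.card ι : ℝ) ≤ M)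
    (hcover : ∀ a ∈ Θ, ∃ i, P a ≪ Q i ∧
      Integrable (fun x => ((P a).rnDeriv (Q i) x).toReal ^ 2) (Q i) ∧
      chiSqDivR (P a) (Q i) ≤ ε ^ 2) :
    ENNReal.ofReal (ℓ (η / 2) * (1 - 1 / N - Real.sqrt ((1 + ε ^ 2) * M / N))) ≤
      ⨅ est : {e : X → A // Measurable e},
        ⨆ a ∈ Θ, ∫⁻ x, ENNReal.ofReal (ℓ (dist a (est.1 x))) ∂(P a) := by
  classical
  have hcard_pos : (0:ℝ) < Fs.card := lt_of_lt_of_le hN hFcard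
  have hFs_ne : Fs.Nonempty := Finset.card_pos.mp (by exact_mod_cast hcard_pos)
  obtain ⟨θ0, hθ0⟩ := hFs_ne
  have hι : Nonempty ι := ⟨(hcover θ0 (hFsub hθ0)).choose⟩
  have hcov' : ∀ θ : A, ∃ i : ι, θ ∈ Θ → (P θ ≪ Q i ∧
      Integrable (fun x => ((P θ).rnDeriv (Q i) x).toReal ^ 2) (Q i) ∧
      chiSqDivR (P θ) (Q i) ≤ ε ^ 2) := by
    intro θ
    by_cases h : θ ∈ Θ
    · obtain ⟨i, hi⟩ := hcover θ h
      exact ⟨i, fun _ => hi⟩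
    · exact ⟨Classical.arbitrary ι, fun h' => absurd h' h⟩
  choose I hI using hcov'
  set L := ℓ (η / 2) with hLdef
  have hL0 : 0 ≤ L := hℓ_nonneg _
  set s := Real.sqrt ((1 + ε ^ 2) * M / N) with hsdef
  have hs0 : 0 ≤ s := Real.sqrt_nonneg _
  refine le_iInf fun est => ?_
  obtain ⟨e, he⟩ := est
  set B : A → Set X := fun θ => e ⁻¹' Metric.ball θ (η / 2) with hBdef
  have hBmeas : ∀ θ, MeasurableSet (B θ) := fun θ => he measurableSet_ball
  have hBdisj : ∀ θ ∈ Fs, ∀ θ' ∈ Fs, θ ≠ θ' → Disjoint (B θ) (B θ') := by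
    intro θ hθ θ' hθ' hne
    rw [Set.disjoint_left]
    intro x hx hx'
    have h1 : dist (e x) θ < η / 2 := hx
    have h2 : dist (e x) θ' < η / 2 := hx'
    have h3 : η ≤ dist θ θ' := hFsep θ hθ θ' hθ' hne
    have hd : dist θ θ' ≤ dist θ (e x) + dist θ' (e x) := dist_triangle_right θ θ' (e x)
    rw [dist_comm θ (e x), dist_comm θ' (e x)] at hd
    linarith
  -- Step 1: pointwise Cauchy-Schwarz bound
  have key : ∀ θ ∈ Fs, (P θ (B θ)).toReal ≤
      Real.sqrt (1 + ε ^ 2) * Real.sqrt ((Q (I θ) (B θ)).toReal) := by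
    intro θ hθ
    haveI hPθ : IsProbabilityMeasure (P θ) := hPprob θ (hFsub hθ)
    obtain ⟨hac, hint, hchi⟩ := hI θ (hFsub hθ)
    haveI : IsProbabilityMeasure (Q (I θ)) := hQprob _
    set ν := Q (I θ) with hνdef
    set f := (P θ).rnDeriv ν with hfdef
    have hint1 : ∫ x, (f x).toReal ^ 2 ∂ν ≤ 1 + ε ^ 2 := by
      have h := hchi
      unfold chiSqDivR at h
      rw [integral_sub hint (integrable_const 1), integral_const] at h
      simp [measure_univ] at h
      linarith
    have hmom : ∫⁻ x, f x ^ (2:ℝ) ∂ν ≤ ENNReal.ofReal (1 + ε ^ 2) := by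
      have hae : ∀ᵐ x ∂ν, f x ^ (2:ℝ) = ENNReal.ofReal ((f x).toReal ^ 2) := by
        filter_upwards [Measure.rnDeriv_lt_top (P θ) ν] with x hx
        rw [show (2:ℝ) = ((2:ℕ):ℝ) by norm_num, ENNReal.rpow_natCast,
          show f x = ENNReal.ofReal ((f x).toReal) from (ENNReal.ofReal_toReal hx.ne).symm,
          ← ENNReal.ofReal_pow ENNReal.toReal_nonneg]
        simp
      rw [lintegral_congr_ae hae,
        ← MeasureTheory.ofReal_integral_eq_lintegral_ofReal hint
          (Filter.Eventually.of_forall fun x => sq_nonneg _)]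
      exact ENNReal.ofReal_le_ofReal hint1
    have hPA : P θ (B θ) = ∫⁻ x, (fun y => f y * (B θ).indicator (1 : X → ℝ≥0∞) y) x ∂ν := by
      rw [← Measure.setLIntegral_rnDeriv hac (B θ), ← lintegral_indicator (hBmeas θ) _]
      congr 1
      funext x
      by_cases hx : x ∈ B θ <;> simp [hx, hfdef]
    have hCS := ENNReal.lintegral_mul_le_Lp_mul_Lq ν
      (Real.holderConjugate_iff.mpr ⟨one_lt_two, by norm_num⟩ : Real.HolderConjugate 2 2)
      (f := f) (g := (B θ).indicator (1 : X → ℝ≥0∞))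
      (Measure.measurable_rnDeriv _ _).aemeasurable
      ((measurable_one.indicator (hBmeas θ)).aemeasurable)
    have hind : ∫⁻ x, ((B θ).indicator (1 : X → ℝ≥0∞) x) ^ (2:ℝ) ∂ν = ν (B θ) := by
      have h1 : ∀ x, ((B θ).indicator (1 : X → ℝ≥0∞) x) ^ (2:ℝ) =
          (B θ).indicator 1 x := by
        intro x
        by_cases hx : x ∈ B θ
        · simp [hx]
        · simp [hx, ENNReal.zero_rpow_of_pos two_pos]
      simp_rw [h1]
      exact lintegral_indicator_one (hBmeas θ)
    rw [hind] at hCS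
    have hbound : P θ (B θ) ≤ ENNReal.ofReal (Real.sqrt (1 + ε ^ 2)) *
        (ν (B θ)) ^ ((1:ℝ)/2) := by
      rw [hPA]
      refine le_trans hCS (mul_le_mul_left ?_ _)
      calc (∫⁻ a, f a ^ (2:ℝ) ∂ν) ^ ((1:ℝ)/2)
          ≤ (ENNReal.ofReal (1 + ε ^ 2)) ^ ((1:ℝ)/2) := by
            exact ENNReal.rpow_le_rpow hmom (by norm_num)
        _ = ENNReal.ofReal (Real.sqrt (1 + ε ^ 2)) := by
            rw [ENNReal.ofReal_rpow_of_pos (by positivity : (0:ℝ) < 1 + ε ^ 2),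
              Real.sqrt_eq_rpow]
    have hfin : ENNReal.ofReal (Real.sqrt (1 + ε ^ 2)) * (ν (B θ)) ^ ((1:ℝ)/2) ≠ ⊤ := by
      apply ENNReal.mul_ne_top ENNReal.ofReal_ne_top
      exact (ENNReal.rpow_lt_top_of_nonneg (by norm_num) (measure_ne_top _ _)).ne
    calc (P θ (B θ)).toReal ≤
        (ENNReal.ofReal (Real.sqrt (1 + ε ^ 2)) * (ν (B θ)) ^ ((1:ℝ)/2)).toReal :=
          ENNReal.toReal_mono hfin hbound
      _ = Real.sqrt (1 + ε ^ 2) * Real.sqrt ((ν (B θ)).toReal) := by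
          rw [ENNReal.toReal_mul, ENNReal.toReal_ofReal (Real.sqrt_nonneg _),
            ← ENNReal.toReal_rpow, Real.sqrt_eq_rpow ((ν (B θ)).toReal)]
    -- Step 2: total covering mass is at most M
  have hsumq : ∑ θ ∈ Fs, (Q (I θ) (B θ)).toReal ≤ M := by
    have hENN : ∑ θ ∈ Fs, Q (I θ) (B θ) ≤ (Fintype.card ι : ℝ≥0∞) := by
      rw [← Finset.sum_fiberwise_of_maps_to (fun θ _ => Finset.mem_univ (I θ))
        (fun θ => Q (I θ) (B θ))]
      calc ∑ i : ι, ∑ θ ∈ Fs.filter (fun θ => I θ = i), Q (I θ) (B θ)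
          ≤ ∑ _i : ι, 1 := by
            refine Finset.sum_le_sum fun i _ => ?_
            have h1 : ∑ θ ∈ Fs.filter (fun θ => I θ = i), Q (I θ) (B θ)
                = ∑ θ ∈ Fs.filter (fun θ => I θ = i), Q i (B θ) := by
              refine Finset.sum_congr rfl fun θ hθ => ?_
              rw [(Finset.mem_filter.mp hθ).2]
            have hd : Set.PairwiseDisjoint ↑(Fs.filter (fun θ => I θ = i)) B := by
              intro θ hθ θ' hθ' hne
              exact hBdisj θ (Finset.mem_filter.mp hθ).1 θ'
                (Finset.mem_filter.mp hθ').1 hne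
            rw [h1, ← measure_biUnion_finset hd (fun θ _ => hBmeas θ)]
            haveI := hQprob i
            exact prob_le_one
        _ = (Fintype.card ι : ℝ≥0∞) := by simp
    calc ∑ θ ∈ Fs, (Q (I θ) (B θ)).toReal
        = (∑ θ ∈ Fs, Q (I θ) (B θ)).toReal :=
          (ENNReal.toReal_sum fun θ _ => measure_ne_top _ _).symm
      _ ≤ ((Fintype.card ι : ℝ≥0∞)).toReal := ENNReal.toReal_mono (by simp) hENN
      _ = (Fintype.card ι : ℝ) := by simp
      _ ≤ M := hGcard
  -- Step 3: sum of the P-masses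
  set c := Real.sqrt (1 + ε ^ 2) with hcdef
  have hc0 : 0 ≤ c := Real.sqrt_nonneg _
  have hsump : ∑ θ ∈ Fs, (P θ (B θ)).toReal ≤
      c * Real.sqrt (Fs.card) * Real.sqrt M := by
    have hq0 : ∀ θ ∈ Fs, (0:ℝ) ≤ (Q (I θ) (B θ)).toReal := fun θ _ => ENNReal.toReal_nonneg
    calc ∑ θ ∈ Fs, (P θ (B θ)).toReal
        ≤ ∑ θ ∈ Fs, c * Real.sqrt ((Q (I θ) (B θ)).toReal) := Finset.sum_le_sum key
      _ = c * ∑ θ ∈ Fs, Real.sqrt ((Q (I θ) (B θ)).toReal) := (Finset.mul_sum _ _ _).symm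
      _ ≤ c * (Real.sqrt (Fs.card) * Real.sqrt M) := by
          refine mul_le_mul_of_nonneg_left ?_ hc0
          have hCS2 : (∑ θ ∈ Fs, Real.sqrt ((Q (I θ) (B θ)).toReal)) ^ 2 ≤
              (Fs.card : ℝ) * ∑ θ ∈ Fs, ((Q (I θ) (B θ)).toReal) := by
            have h := sq_sum_le_card_mul_sum_sq
              (s := Fs) (f := fun θ => Real.sqrt ((Q (I θ) (B θ)).toReal))
            refine h.trans (le_of_eq ?_)
            congr 1
            exact Finset.sum_congr rfl fun θ _ => Real.sq_sqrt ENNReal.toReal_nonneg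
          have h5 : ∑ θ ∈ Fs, Real.sqrt ((Q (I θ) (B θ)).toReal) ≤
              Real.sqrt ((Fs.card : ℝ) * ∑ θ ∈ Fs, ((Q (I θ) (B θ)).toReal)) := by
            rw [← Real.sqrt_sq (Finset.sum_nonneg fun θ _ => Real.sqrt_nonneg _)]
            exact Real.sqrt_le_sqrt hCS2
          refine h5.trans ?_
          calc Real.sqrt ((Fs.card : ℝ) * ∑ θ ∈ Fs, ((Q (I θ) (B θ)).toReal))
              ≤ Real.sqrt ((Fs.card : ℝ) * M) :=
                Real.sqrt_le_sqrt (mul_le_mul_of_nonneg_left hsumq hcard_pos.le)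
            _ = Real.sqrt (Fs.card) * Real.sqrt M := Real.sqrt_mul hcard_pos.le M
      _ = c * Real.sqrt (Fs.card) * Real.sqrt M := by ring
  -- Step 4: some point has small success probability
  have hmin : ∃ θ ∈ Fs, (P θ (B θ)).toReal ≤ s := by
    have hcne : (Fs.card : ℝ) ≠ 0 := ne_of_gt hcard_pos
    have havg : ∃ θ ∈ Fs, (P θ (B θ)).toReal ≤
        (∑ θ' ∈ Fs, (P θ' (B θ')).toReal) / Fs.card := by
      apply Finset.exists_le_of_sum_le ⟨θ0, hθ0⟩
      rw [Finset.sum_const, nsmul_eq_mul, mul_div_cancel₀ _ hcne]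
    obtain ⟨θ, hθF, hθle⟩ := havg
    refine ⟨θ, hθF, hθle.trans ?_⟩
    have hsq : Real.sqrt (Fs.card : ℝ) > 0 := Real.sqrt_pos.mpr hcard_pos
    have h6 : (∑ θ' ∈ Fs, (P θ' (B θ')).toReal) / (Fs.card : ℝ) ≤
        c * Real.sqrt M / Real.sqrt (Fs.card : ℝ) := by
      rw [div_le_div_iff₀ hcard_pos hsq]
      calc (∑ θ' ∈ Fs, (P θ' (B θ')).toReal) * Real.sqrt (Fs.card : ℝ)
          ≤ (c * Real.sqrt (Fs.card) * Real.sqrt M) * Real.sqrt (Fs.card : ℝ) :=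
            mul_le_mul_of_nonneg_right hsump hsq.le
        _ = c * Real.sqrt M * (Real.sqrt (Fs.card : ℝ) * Real.sqrt (Fs.card : ℝ)) := by ring
        _ = c * Real.sqrt M * (Fs.card : ℝ) := by rw [Real.mul_self_sqrt hcard_pos.le]
    refine h6.trans ?_
    have h7 : c * Real.sqrt M / Real.sqrt (Fs.card : ℝ) =
        Real.sqrt ((1 + ε ^ 2) * M / (Fs.card : ℝ)) := by
      rw [hcdef, show (1 + ε ^ 2) * M / (Fs.card : ℝ) =
          (1 + ε ^ 2) * (M / (Fs.card : ℝ)) by ring,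
        Real.sqrt_mul (by positivity : (0:ℝ) ≤ 1 + ε ^ 2), Real.sqrt_div hM,
        mul_div_assoc]
    rw [h7, hsdef]
    apply Real.sqrt_le_sqrt
    exact div_le_div_of_nonneg_left (by positivity) hN hFcard
  -- Step 5: conclude
  obtain ⟨θ, hθF, hpθ⟩ := hmin
  haveI := hPprob θ (hFsub hθF)
  have hcompl : ENNReal.ofReal (1 - s) ≤ P θ ((B θ)ᶜ) := by
    have hsum1 : P θ (B θ) + P θ ((B θ)ᶜ) = 1 := by
      rw [measure_add_measure_compl (hBmeas θ), measure_univ]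
    have ht : (P θ ((B θ)ᶜ)).toReal = 1 - (P θ (B θ)).toReal := by
      have h := congrArg ENNReal.toReal hsum1
      rw [ENNReal.toReal_add (measure_ne_top _ _) (measure_ne_top _ _)] at h
      simp only [ENNReal.toReal_one] at h
      linarith
    have h2 : 1 - s ≤ (P θ ((B θ)ᶜ)).toReal := by
      rw [ht]
      linarith
    calc ENNReal.ofReal (1 - s)
        ≤ ENNReal.ofReal ((P θ ((B θ)ᶜ)).toReal) := ENNReal.ofReal_le_ofReal h2
      _ = P θ ((B θ)ᶜ) := ENNReal.ofReal_toReal (measure_ne_top _ _)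
  have hrisk : ENNReal.ofReal L * P θ ((B θ)ᶜ) ≤
      ∫⁻ x, ENNReal.ofReal (ℓ (dist θ (e x))) ∂(P θ) := by
    calc ENNReal.ofReal L * P θ ((B θ)ᶜ)
        = ∫⁻ _x in (B θ)ᶜ, ENNReal.ofReal L ∂(P θ) := (setLIntegral_const _ _).symm
      _ ≤ ∫⁻ x in (B θ)ᶜ, ENNReal.ofReal (ℓ (dist θ (e x))) ∂(P θ) := by
          refine setLIntegral_mono' (hBmeas θ).compl fun x hx => ?_
          apply ENNReal.ofReal_le_ofReal
          have hnot : ¬ dist (e x) θ < η / 2 := hx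
          have hdist : η / 2 ≤ dist θ (e x) := by
            rw [dist_comm]; exact not_lt.mp hnot
          exact hℓ_mono (Set.mem_Ici.mpr (by linarith)) (Set.mem_Ici.mpr dist_nonneg) hdist
      _ ≤ ∫⁻ x, ENNReal.ofReal (ℓ (dist θ (e x))) ∂(P θ) := setLIntegral_le_lintegral _ _
  calc ENNReal.ofReal (L * (1 - 1 / N - s))
      ≤ ENNReal.ofReal (L * (1 - s)) := by
        apply ENNReal.ofReal_le_ofReal
        apply mul_le_mul_of_nonneg_left _ hL0
        have : 0 < 1 / N := by positivity
        linarith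
    _ = ENNReal.ofReal L * ENNReal.ofReal (1 - s) := ENNReal.ofReal_mul hL0
    _ ≤ ENNReal.ofReal L * P θ ((B θ)ᶜ) := mul_le_mul_right hcompl _
    _ ≤ ∫⁻ x, ENNReal.ofReal (ℓ (dist θ (e x))) ∂(P θ) := hrisk
    _ ≤ ⨆ a ∈ Θ, ∫⁻ x, ENNReal.ofReal (ℓ (dist a (e x))) ∂(P a) :=
        le_biSup (fun a => ∫⁻ x, ENNReal.ofReal (ℓ (dist a (e x))) ∂(P a)) (hFsub hθF)
end

section
/- Fix α > 0, Δ > 0, and integers p ≥ 2k ≥ 2. Let A(τ), for τ ∈ {0,1}^k, be the symmetric p×p matrix with entries a_{ii} = 1, a_{ij} = 1/(Δ|i−j|^{α+1}) for i ≠ j except that, for 1 ≤ r ≤ k and k+1 ≤ s ≤ p, the (r,s) and (s,r) entries are τ_r/(Δ|r−s|^{α+1}). Then for all τ, τ' ∈ {0,1}^k with τ ≠ τ', the operator (spectral) norm satisfies ||A(τ) − A(τ')|| ≥ (2^{−α−1}/(Δ k^α))·√( Υ(τ,τ')/k ), where Υ(τ,τ') := Σ_{r=1}^k 1{τ_r ≠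 τ'_r} is the Hamming distance between τ and τ'. -/
open scoped Matrix.Norms.L2Operator
open scoped Matrix

/-- The covariance matrices `A(τ)` of Section VI (0-indexed): `a_{ii} = 1`,
`a_{ij} = 1/(Δ|i-j|^(α+1))` for `i ≠ j`, except that for `i < k ≤ j` (and symmetrically)
the entry is multiplied by `τ_i ∈ {0,1}`. -/
noncomputable def covMat (α Δ : ℝ) (p k : ℕ) (τ : ℕ → Bool) :
    Matrix (Fin p) (Fin p) ℝ := fun i j =>
  if i = j then 1
  else if i.1 < k ∧ k ≤ j.1 then
    (if τ i.1 then 1 else 0) / (Δ * |(i.1 : ℝ) - (j.1 : ℝ)| ^ (α + 1))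
  else if j.1 < k ∧ k ≤ i.1 then
    (if τ j.1 then 1 else 0) / (Δ * |(i.1 : ℝ) - (j.1 : ℝ)| ^ (α + 1))
  else 1 / (Δ * |(i.1 : ℝ) - (j.1 : ℝ)| ^ (α + 1))

/-- **Statement 17** (Lemma 1): for `τ ≠ τ'` in `{0,1}^k`, the spectral norm satisfies
`‖A(τ) - A(τ')‖ ≥ (2^(-α-1)/(Δ k^α)) √(Υ(τ,τ')/k)`, where `Υ` is the Hamming distance. -/
theorem statement17 (α Δ : ℝ) (hα : 0 < α) (hΔ : 0 < Δ) (p k : ℕ)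
    (hk : 1 ≤ k) (hpk : 2 * k ≤ p)
    (τ τ' : ℕ → Bool) (hne : ∃ r < k, τ r ≠ τ' r) :
    (2 : ℝ) ^ (-(α + 1)) / (Δ * (k : ℝ) ^ α) *
        Real.sqrt ((((Finset.range k).filter fun r => τ r ≠ τ' r).card : ℝ) / k) ≤
      ‖covMat α Δ p k τ - covMat α Δ p k τ'‖ := by
  classical
  set D := covMat α Δ p k τ - covMat α Δ p k τ' with hD
  have hkR : (0:ℝ) < k := by exact_mod_cast hk
  -- the test vector
  set v : EuclideanSpace ℝ (Fin p) := WithLp.toLp 2 (fun j : Fin p => if k ≤ j.1 ∧ j.1 < 2*k then (1:ℝ) else 0)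
    with hv
  set S : Finset (Fin p) := Finset.univ.filter (fun j : Fin p => k ≤ j.1 ∧ j.1 < 2*k)
    with hS
  set T : Finset (Fin p) := Finset.univ.filter (fun i : Fin p => i.1 < k ∧ τ i.1 ≠ τ' i.1)
    with hT
  have hScard : S.card = k := by
    have : S.card = (Finset.Ico k (2*k)).card := by
      apply Finset.card_nbij (fun j : Fin p => j.1)
      · intro a ha
        simp only [hS, Finset.mem_coe, Finset.mem_filter] at ha
        simp [Finset.mem_Ico, ha.2.1, ha.2.2]
      · intro a _ b _ h; exact Fin.val_injective h
      · intro b hb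
        simp only [Finset.coe_Ico, Set.mem_Ico] at hb
        exact ⟨⟨b, lt_of_lt_of_le hb.2 hpk⟩, by simp [hS, hb.1, hb.2], rfl⟩
    rw [this, Nat.card_Ico]; omega
  have hTcard : T.card = ((Finset.range k).filter fun r => τ r ≠ τ' r).card := by
    apply Finset.card_nbij (fun j : Fin p => j.1)
    · intro a ha
      simp only [hT, Finset.mem_coe, Finset.mem_filter] at ha
      simp [Finset.mem_range, ha.2.1, ha.2.2]
    · intro a _ b _ h; exact Fin.val_injective h
    · intro b hb
      simp only [Finset.coe_filter, Finset.mem_range, Set.mem_setOf_eq] at hb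
      exact ⟨⟨b, by omega⟩, by simp [hT, hb.1, hb.2], rfl⟩
  -- entries of D
  have hDentry : ∀ i j : Fin p, i.1 < k → k ≤ j.1 →
      D i j = ((if τ i.1 then (1:ℝ) else 0) - (if τ' i.1 then 1 else 0)) /
        (Δ * |(i.1 : ℝ) - (j.1 : ℝ)| ^ (α + 1)) := by
    intro i j hi hj
    have hij : i ≠ j := by
      intro h; subst h; omega
    simp only [hD, Matrix.sub_apply, covMat, if_neg hij, if_pos (And.intro hi hj)]
    rw [div_sub_div_same]
  set c : ℝ := k / (Δ * ((2*k : ℕ) : ℝ) ^ (α + 1)) with hc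
  have h2k : (0:ℝ) < ((2*k : ℕ) : ℝ) := by positivity
  have hcpos : 0 < c := by positivity
  -- lower bound on each relevant coordinate of D *ᵥ v
  have hcoord : ∀ i ∈ T, c ≤ |(D *ᵥ v) i| := by
    intro i hi
    simp only [hT, Finset.mem_filter] at hi
    obtain ⟨-, hik, hτ⟩ := hi
    have hmv : (D *ᵥ v) i = ∑ j ∈ S, D i j := by
      simp only [Matrix.mulVec, dotProduct, hv]
      rw [hS, Finset.sum_filter]
      congr 1; ext j
      by_cases h : k ≤ j.1 ∧ j.1 < 2*k <;> simp [h]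
    set ε : ℝ := (if τ i.1 then (1:ℝ) else 0) - (if τ' i.1 then 1 else 0) with hε
    have hεabs : |ε| = 1 := by
      rcases Bool.eq_false_or_eq_true (τ i.1) with h1 | h1 <;>
        rcases Bool.eq_false_or_eq_true (τ' i.1) with h2 | h2 <;>
        simp [hε, h1, h2] at hτ ⊢
    have hterm : ∀ j ∈ S, c / k ≤ 1 / (Δ * |(i.1 : ℝ) - (j.1 : ℝ)| ^ (α + 1)) := by
      intro j hj
      simp only [hS, Finset.mem_filter] at hj
      have habs : |(i.1 : ℝ) - (j.1 : ℝ)| = (j.1 : ℝ) - i.1 := by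
        rw [abs_sub_comm, abs_of_nonneg]
        have : (i.1:ℝ) ≤ j.1 := by exact_mod_cast le_of_lt (lt_of_lt_of_le hik hj.2.1)
        linarith
      have hone : (1:ℝ) ≤ |(i.1 : ℝ) - (j.1 : ℝ)| := by
        rw [habs]
        have : (i.1:ℝ) + 1 ≤ j.1 := by exact_mod_cast Nat.succ_le_of_lt (lt_of_lt_of_le hik hj.2.1)
        linarith
      have hle : |(i.1 : ℝ) - (j.1 : ℝ)| ≤ ((2*k : ℕ) : ℝ) := by
        rw [habs]
        have : (j.1:ℝ) ≤ ((2*k:ℕ):ℝ) := by exact_mod_cast le_of_lt hj.2.2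
        have : (0:ℝ) ≤ (i.1:ℝ) := by positivity
        linarith
      have hrle : |(i.1 : ℝ) - (j.1 : ℝ)| ^ (α + 1) ≤ ((2*k : ℕ) : ℝ) ^ (α + 1) :=
        Real.rpow_le_rpow (abs_nonneg _) hle (by linarith)
      have hpos : 0 < Δ * |(i.1 : ℝ) - (j.1 : ℝ)| ^ (α + 1) := by
        apply mul_pos hΔ
        apply Real.rpow_pos_of_pos; linarith
      rw [hc]
      rw [div_div, div_le_div_iff₀ (by positivity) hpos]
      have : Δ * |(i.1 : ℝ) - (j.1 : ℝ)| ^ (α + 1) ≤ Δ * ((2*k:ℕ):ℝ) ^ (α + 1) :=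
        mul_le_mul_of_nonneg_left hrle (le_of_lt hΔ)
      nlinarith
    have hsum : c ≤ ∑ j ∈ S, 1 / (Δ * |(i.1 : ℝ) - (j.1 : ℝ)| ^ (α + 1)) := by
      calc c = S.card • (c / k) := by
              rw [hScard, nsmul_eq_mul]; field_simp
        _ ≤ ∑ j ∈ S, 1 / (Δ * |(i.1 : ℝ) - (j.1 : ℝ)| ^ (α + 1)) :=
              Finset.card_nsmul_le_sum S _ _ hterm
    have : (D *ᵥ v) i = ε * ∑ j ∈ S, 1 / (Δ * |(i.1 : ℝ) - (j.1 : ℝ)| ^ (α + 1)) := by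
      rw [hmv, Finset.mul_sum]
      apply Finset.sum_congr rfl
      intro j hj
      simp only [hS, Finset.mem_filter] at hj
      rw [hDentry i j hik hj.2.1, ← hε]
      ring
    rw [this, abs_mul, hεabs, one_mul]
    calc c ≤ ∑ j ∈ S, 1 / (Δ * |(i.1 : ℝ) - (j.1 : ℝ)| ^ (α + 1)) := hsum
      _ ≤ |∑ j ∈ S, 1 / (Δ * |(i.1 : ℝ) - (j.1 : ℝ)| ^ (α + 1))| := le_abs_self _
  -- norm of v
  have hvnorm : ‖v‖ = Real.sqrt k := by
    rw [EuclideanSpace.norm_eq]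
    congr 1
    have : ∀ j : Fin p, ‖v j‖ ^ 2 = if k ≤ j.1 ∧ j.1 < 2*k then (1:ℝ) else 0 := by
      intro j
      by_cases h : k ≤ j.1 ∧ j.1 < 2*k <;> simp [hv, h]
    rw [Finset.sum_congr rfl (fun j _ => this j), Finset.sum_boole]
    simp only [Finset.filter_univ_mem, ← hS, hScard]
  -- norm of D *ᵥ v
  set w : EuclideanSpace ℝ (Fin p) := (EuclideanSpace.equiv (Fin p) ℝ).symm (D *ᵥ v) with hw
  have hwnorm : Real.sqrt (T.card * c ^ 2) ≤ ‖w‖ := by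
    rw [EuclideanSpace.norm_eq]
    apply Real.sqrt_le_sqrt
    calc (T.card : ℝ) * c ^ 2 = ∑ _i ∈ T, c ^ 2 := by rw [Finset.sum_const, nsmul_eq_mul]
      _ ≤ ∑ i ∈ T, ‖w i‖ ^ 2 := by
          apply Finset.sum_le_sum
          intro i hi
          have h1 := hcoord i hi
          have hwi : w i = (D *ᵥ v) i := rfl
          rw [hwi, Real.norm_eq_abs]
          nlinarith [abs_nonneg ((D *ᵥ v) i), hcpos.le]
      _ ≤ ∑ i, ‖w i‖ ^ 2 := by
          apply Finset.sum_le_sum_of_subset_of_nonneg (Finset.subset_univ T)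
          intro i _ _; positivity
  have hmain : Real.sqrt (T.card * c ^ 2) ≤ ‖D‖ * Real.sqrt k :=
    le_trans hwnorm (by rw [← hvnorm]; exact Matrix.l2_opNorm_mulVec D v)
  -- final arithmetic
  have hsqrtk : (0:ℝ) < Real.sqrt k := Real.sqrt_pos.mpr hkR
  rw [← hTcard]
  have hkα : (0:ℝ) < (k:ℝ) ^ α := Real.rpow_pos_of_pos hkR _
  have hceq : c = (2 : ℝ) ^ (-(α + 1)) / (Δ * (k : ℝ) ^ α) := by
    rw [hc, Real.rpow_neg (by norm_num)]
    push_cast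
    rw [Real.mul_rpow (by norm_num) hkR.le, Real.rpow_add hkR, Real.rpow_one]
    have h2 : (0:ℝ) < (2:ℝ) ^ (α+1) := Real.rpow_pos_of_pos (by norm_num) _
    field_simp
  have hsplit : Real.sqrt ((T.card : ℝ) / k) = Real.sqrt (T.card) / Real.sqrt k :=
    Real.sqrt_div (by positivity) _
  rw [hsplit, ← hceq]
  apply le_of_mul_le_mul_right _ hsqrtk
  calc c * (Real.sqrt T.card / Real.sqrt k) * Real.sqrt k
      = Real.sqrt ((T.card : ℝ) * c ^ 2) := by
        rw [Real.sqrt_mul (by positivity), Real.sqrt_sq hcpos.le]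
        field_simp
    _ ≤ ‖D‖ * Real.sqrt k := hmain
    _ ≤ _ := le_rfl
end
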